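/- arXiv:2404.04288 — 5 statements merged into one kernel-verified Lean document; each statement's English description precedes it below -/
import Mathlib

section
/- Let h > 0 be real. Let m : ℝ → ℂ be Lebesgue measurable and Lebesgue integrable, let j ∈ ℕ, let a₀,…,a_j ∈ ℂ, N₀,…,N_j ∈ ℕ, and c₀,…,c_j ∈ ℝ with c_k ∉ {1/(2h) + ν/h : ν ∈ ℤ} for every k. Suppose f : ℝ → ℂ satisfies f(w) = ∫_ℝ m(x) e^{-2πi w x} dx + ∑_{k=0}^{j} a_k e^{-2πi c_k w} (2πi w)^{N_k} for every w ∈ ℝ. Then for every y ∈ ℝ, lim_{n→∞} δ_h^n[f](y) / 2^n = 0, i.e. δ_h^n[f](y) = o(2^n). -/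
open MeasureTheory Filter Finset Topology Polynomial

noncomputable section

namespace CDaux

/-- scaled shift operator -/
def U (z : ℂ) (r : ℂ) : Module.End ℂ (Polynomial ℂ) := z • (Polynomial.taylor r)

lemma U_apply (z r : ℂ) (P : ℂ[X]) : U z r P = z • Polynomial.taylor r P :=
  LinearMap.smul_apply _ _ _

lemma commute_U (z z' r r' : ℂ) : Commute (U z r) (U z' r') := by
  apply LinearMap.ext
  intro P
  simp only [Module.End.mul_apply, U_apply, LinearMapClass.map_smul, taylor_taylor, smul_smul]
  rw [mul_comm z z', add_comm r r']

lemma Upow_eval (z r : ℂ) (q : ℕ) (P : ℂ[X]) (t : ℂ) :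
    ((U z r ^ q) P).eval t = z ^ q * P.eval (t + q * r) := by
  induction q generalizing P t with
  | zero => simp
  | succ q ih =>
    rw [pow_succ, Module.End.mul_apply, ih, U_apply]
    simp only [eval_smul, smul_eq_mul, taylor_eval]
    push_cast
    ring

end CDaux

namespace CDaux

/-- the central difference operator on polynomials, twisted by exponentials -/
def E (zp zm : ℂ) (r : ℂ) : Module.End ℂ (Polynomial ℂ) := U zp r - U zm (-r)

lemma E_eq (zp zm r : ℂ) : E zp zm r = U (-zm) (-r) + U zp r := by
  have h1 : U (-zm) (-r) = - U zm (-r) := by simp only [U]; module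
  rw [h1, E, sub_eq_add_neg, add_comm]

lemma Eexpand (zp zm r : ℂ) (n : ℕ) (P : ℂ[X]) (t : ℂ) :
    (((E zp zm r) ^ n) P).eval t
      = ∑ k ∈ Finset.range (n + 1),
          (n.choose k : ℂ) * (-1) ^ k * zp ^ (n - k) * zm ^ k
            * P.eval (t + ((n : ℂ) - 2 * k) * r) := by
  rw [E_eq, Commute.add_pow (commute_U _ _ _ _) n]
  rw [LinearMap.sum_apply, eval_finset_sum]
  refine Finset.sum_congr rfl fun k hk => ?_
  have hk' : k ≤ n := Nat.lt_succ_iff.mp (Finset.mem_range.mp hk)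
  have : (U (-zm) (-r) ^ k * U zp r ^ (n - k) * (n.choose k : Module.End ℂ (Polynomial ℂ))) P
      = (U (-zm) (-r) ^ k) ((U zp r ^ (n - k)) ((n.choose k : ℂ) • P)) := by
    simp only [Module.End.mul_apply]
    congr 1
    congr 1
    simp [Module.End.natCast_apply, ← Nat.cast_smul_eq_nsmul ℂ]
  rw [this, Upow_eval, Upow_eval]
  simp only [eval_smul, smul_eq_mul]
  have : (-zm) ^ k = (-1) ^ k * zm ^ k := by rw [neg_pow]
  rw [this]
  have hcast : ((n - k : ℕ) : ℂ) = (n : ℂ) - (k : ℂ) := by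
    push_cast [hk']; ring
  rw [hcast]
  ring

end CDaux

namespace CDaux

lemma E_C (zp zm r b : ℂ) : E zp zm r (Polynomial.C b) = Polynomial.C ((zp - zm) * b) := by
  simp only [E, LinearMap.sub_apply, U_apply, taylor_C, Polynomial.smul_C, smul_eq_mul,
    ← Polynomial.C_sub]
  ring_nf

lemma En_one (zp zm r : ℂ) (n : ℕ) :
    ((E zp zm r) ^ n) 1 = Polynomial.C ((zp - zm) ^ n) := by
  induction n with
  | zero => simp
  | succ n ih =>
    rw [pow_succ', Module.End.mul_apply, ih, E_C, ← pow_succ']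

lemma taylor_sub_degree_lt (r : ℂ) (P : ℂ[X]) (hP : P ≠ 0) :
    (Polynomial.taylor r P - P).degree < P.degree := by
  have hne : Polynomial.taylor r P ≠ 0 := fun hz => hP (by
    apply Polynomial.taylor_injective r
    simpa using hz)
  have hdeg : (Polynomial.taylor r P).degree = P.degree := by
    rw [Polynomial.degree_eq_natDegree hne, Polynomial.degree_eq_natDegree hP,
      natDegree_taylor]
  have hlc : (Polynomial.taylor r P).leadingCoeff = P.leadingCoeff := by
    rw [taylor_apply, Polynomial.leadingCoeff_comp (by simp)]
    simp
  calc (Polynomial.taylor r P - P).degree < (Polynomial.taylor r P).degree :=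
        Polynomial.degree_sub_lt hdeg hne hlc
    _ = P.degree := hdeg

lemma E_decomp_degree_lt (zp zm r : ℂ) (P : ℂ[X]) (hP : P ≠ 0) :
    (E zp zm r P - (zp - zm) • P).degree < P.degree := by
  have hEq : E zp zm r P - (zp - zm) • P
      = zp • (Polynomial.taylor r P - P) - zm • (Polynomial.taylor (-r) P - P) := by
    simp only [E, LinearMap.sub_apply, U_apply, smul_sub, sub_smul]
    abel
  rw [hEq]
  refine lt_of_le_of_lt (Polynomial.degree_sub_le _ _) (max_lt ?_ ?_)
  · exact lt_of_le_of_lt (Polynomial.degree_smul_le _ _) (taylor_sub_degree_lt r P hP)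
  · exact lt_of_le_of_lt (Polynomial.degree_smul_le _ _) (taylor_sub_degree_lt (-r) P hP)

end CDaux

namespace CDaux

lemma tendsto_zero_of_recur (r : ℂ) (hr : ‖r‖ < 1) (x e : ℕ → ℂ)
    (he : Tendsto e atTop (𝓝 0)) (hx : ∀ n, x (n + 1) = r * x n + e n) :
    Tendsto x atTop (𝓝 0) := by
  rw [NormedAddCommGroup.tendsto_nhds_zero]
  intro ε hε
  have hs0 : (0:ℝ) ≤ ‖r‖ := norm_nonneg r
  have hδ : 0 < (1 - ‖r‖) * (ε / 2) := by
    apply mul_pos (by linarith) (by linarith)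
  obtain ⟨M, hM⟩ := (Filter.eventually_atTop).mp
    ((NormedAddCommGroup.tendsto_nhds_zero.mp he) _ hδ)
  have hbound : ∀ i, ‖x (M + i)‖ ≤ ‖r‖ ^ i * ‖x M‖ + ε / 2 := by
    intro i
    induction i with
    | zero => simp; linarith
    | succ i ih =>
      have : x (M + i + 1) = r * x (M + i) + e (M + i) := hx (M + i)
      have h1 : ‖x (M + i + 1)‖ ≤ ‖r‖ * ‖x (M + i)‖ + ‖e (M + i)‖ := by
        rw [this]
        exact (norm_add_le _ _).trans (by rw [norm_mul])
      have h2 : ‖e (M + i)‖ ≤ (1 - ‖r‖) * (ε / 2) := le_of_lt (hM _ (Nat.le_add_right _ _))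
      have h3 : ‖r‖ * ‖x (M + i)‖ ≤ ‖r‖ * (‖r‖ ^ i * ‖x M‖ + ε / 2) :=
        mul_le_mul_of_nonneg_left ih hs0
      have : (M + (i+1)) = (M + i) + 1 := by ring
      rw [this]
      calc ‖x (M + i + 1)‖ ≤ ‖r‖ * (‖r‖ ^ i * ‖x M‖ + ε / 2) + (1 - ‖r‖) * (ε / 2) := by
            linarith
        _ ≤ ‖r‖ ^ (i+1) * ‖x M‖ + ε / 2 := by
            rw [pow_succ]
            nlinarith [pow_nonneg hs0 i, norm_nonneg (x M)]
  have hpow : Tendsto (fun i => ‖r‖ ^ i * ‖x M‖) atTop (𝓝 0) := by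
    simpa using (tendsto_pow_atTop_nhds_zero_of_norm_lt_one (x := ‖r‖)
      (by simpa using hr)).mul_const ‖x M‖
  obtain ⟨i₀, hi₀⟩ := (Filter.eventually_atTop).mp
    (hpow.eventually (gt_mem_nhds (by linarith : (0:ℝ) < ε / 2)))
  refine Filter.eventually_atTop.mpr ⟨M + i₀, fun n hn => ?_⟩
  have hn' : n = M + (n - M) := by omega
  have hge : i₀ ≤ n - M := by omega
  have h1 : ‖x n‖ ≤ ‖r‖ ^ (n - M) * ‖x M‖ + ε / 2 := by
    have := hbound (n - M)
    rwa [← hn'] at this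
  have h2 : ‖r‖ ^ (n - M) * ‖x M‖ ≤ ‖r‖ ^ i₀ * ‖x M‖ :=
    mul_le_mul_of_nonneg_right
      (pow_le_pow_of_le_one hs0 (le_of_lt hr) hge) (norm_nonneg _)
  have h3 : ‖r‖ ^ i₀ * ‖x M‖ < ε / 2 := hi₀ i₀ le_rfl
  linarith

end CDaux

namespace CDaux

lemma poly_key (zp zm rr : ℂ) (hl : ‖zp - zm‖ < 2) :
    ∀ (d : ℕ) (P : ℂ[X]), P.natDegree < d → ∀ t : ℂ,
      Tendsto (fun n : ℕ => (((E zp zm rr) ^ n) P).eval t / 2 ^ n) atTop (𝓝 0) := by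
  intro d
  induction d with
  | zero => intro P hP; omega
  | succ d ih =>
    intro P hP t
    by_cases hP0 : P = 0
    · simpa [hP0] using tendsto_const_nhds
    have hEP : E zp zm rr P = (zp - zm) • P + (E zp zm rr P - (zp - zm) • P) := by abel
    set R : ℂ[X] := E zp zm rr P - (zp - zm) • P with hRdef
    have hRtend : Tendsto (fun n : ℕ => (((E zp zm rr) ^ n) R).eval t / 2 ^ n) atTop (𝓝 0) := by
      by_cases hR0 : R = 0
      · simpa [hR0] using tendsto_const_nhds
      · refine ih R ?_ t
        have hdeg := E_decomp_degree_lt zp zm rr P hP0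
        have := Polynomial.natDegree_lt_natDegree hR0 hdeg
        omega
    have hrec : ∀ n : ℕ, (((E zp zm rr) ^ (n+1)) P).eval t / 2 ^ (n+1)
        = ((zp - zm) / 2) * ((((E zp zm rr) ^ n) P).eval t / 2 ^ n)
          + ((((E zp zm rr) ^ n) R).eval t / 2 ^ n) / 2 := by
      intro n
      have h1 : ((E zp zm rr) ^ (n+1)) P = (E zp zm rr ^ n) (E zp zm rr P) := by
        rw [pow_succ, Module.End.mul_apply]
      rw [h1, hEP, map_add, LinearMapClass.map_smul]
      simp only [Polynomial.eval_add, Polynomial.eval_smul, smul_eq_mul]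
      have h2 : (2:ℂ) ^ n ≠ 0 := pow_ne_zero _ two_ne_zero
      field_simp
      ring
    have hnorm : ‖(zp - zm) / 2‖ < 1 := by
      rw [norm_div]
      simp only [Complex.norm_ofNat]
      linarith
    exact tendsto_zero_of_recur _ hnorm _ _ (by simpa using hRtend.div_const 2) hrec

end CDaux

namespace CDaux

lemma keysum (h y cc : ℝ) (P : ℂ[X]) (n : ℕ) :
    ∑ k ∈ Finset.range (n + 1), (n.choose k : ℂ) * (-1) ^ k
        * Complex.exp (-2 * (Real.pi : ℂ) * Complex.I * (cc : ℂ)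
            * ((y + ((n : ℝ) / 2 - (k : ℝ)) * h : ℝ) : ℂ))
        * P.eval ((y + ((n : ℝ) / 2 - (k : ℝ)) * h : ℝ) : ℂ)
      = Complex.exp (-2 * (Real.pi : ℂ) * Complex.I * (cc : ℂ) * (y : ℂ))
        * (((E (Complex.exp (-(Real.pi : ℂ) * Complex.I * (cc : ℂ) * (h : ℂ)))
              (Complex.exp ((Real.pi : ℂ) * Complex.I * (cc : ℂ) * (h : ℂ)))
              ((h : ℂ) / 2)) ^ n) P).eval (y : ℂ) := by
  rw [Eexpand, Finset.mul_sum]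
  refine Finset.sum_congr rfl fun k hk => ?_
  have hk' : k ≤ n := Nat.lt_succ_iff.mp (Finset.mem_range.mp hk)
  have hcast : ((y + ((n : ℝ) / 2 - (k : ℝ)) * h : ℝ) : ℂ)
      = (y : ℂ) + ((n : ℂ) - 2 * k) * ((h : ℂ) / 2) := by push_cast; ring
  rw [hcast]
  have hexp : Complex.exp (-2 * (Real.pi : ℂ) * Complex.I * (cc : ℂ)
        * ((y : ℂ) + ((n : ℂ) - 2 * k) * ((h : ℂ) / 2)))
      = Complex.exp (-2 * (Real.pi : ℂ) * Complex.I * (cc : ℂ) * (y : ℂ))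
        * (Complex.exp (-(Real.pi : ℂ) * Complex.I * (cc : ℂ) * (h : ℂ))) ^ (n - k)
        * (Complex.exp ((Real.pi : ℂ) * Complex.I * (cc : ℂ) * (h : ℂ))) ^ k := by
    rw [← Complex.exp_nat_mul, ← Complex.exp_nat_mul, ← Complex.exp_add, ← Complex.exp_add]
    congr 1
    have hnk : ((n - k : ℕ) : ℂ) = (n : ℂ) - (k : ℂ) := by
      rw [Nat.cast_sub hk']
    rw [hnk]
    ring
  rw [hexp]
  ring

lemma norm_zp_sub_zm (cc hh : ℝ) :
    ‖Complex.exp (-(Real.pi : ℂ) * Complex.I * (cc : ℂ) * (hh : ℂ))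
      - Complex.exp ((Real.pi : ℂ) * Complex.I * (cc : ℂ) * (hh : ℂ))‖
      = 2 * |Real.sin (Real.pi * cc * hh)| := by
  have h1 : -(Real.pi : ℂ) * Complex.I * (cc : ℂ) * (hh : ℂ)
      = ((-(Real.pi * cc * hh) : ℝ) : ℂ) * Complex.I := by push_cast; ring
  have h2 : (Real.pi : ℂ) * Complex.I * (cc : ℂ) * (hh : ℂ)
      = (((Real.pi * cc * hh) : ℝ) : ℂ) * Complex.I := by push_cast; ring
  rw [h1, h2, Complex.exp_mul_I, Complex.exp_mul_I]
  set θ : ℝ := Real.pi * cc * hh with hθ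
  have h3 : (Complex.cos (-θ : ℝ) + Complex.sin (-θ : ℝ) * Complex.I)
      - (Complex.cos (θ : ℝ) + Complex.sin (θ : ℝ) * Complex.I)
      = (((-2 * Real.sin θ : ℝ)) : ℂ) * Complex.I := by
    push_cast
    rw [Complex.cos_neg, Complex.sin_neg]
    ring
  rw [h3, norm_mul, Complex.norm_I, mul_one, Complex.norm_real]
  rw [Real.norm_eq_abs, abs_mul]
  norm_num

lemma abs_sin_lt_one {θ : ℝ} (hcos : Real.cos θ ≠ 0) : |Real.sin θ| < 1 := by
  have h2 : 0 < Real.cos θ ^ 2 := lt_of_le_of_ne (sq_nonneg _) (Ne.symm (pow_ne_zero 2 hcos))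
  have h3 := Real.sin_sq_add_cos_sq θ
  nlinarith [sq_abs (Real.sin θ), abs_nonneg (Real.sin θ)]

lemma cos_ne (h : ℝ) (hh : 0 < h) (cc : ℝ)
    (hcc : ¬ ∃ ν : ℤ, cc = 1 / (2 * h) + (ν : ℝ) / h) :
    Real.cos (Real.pi * cc * h) ≠ 0 := by
  intro h0
  obtain ⟨k, hk⟩ := Real.cos_eq_zero_iff.mp h0
  refine hcc ⟨k, ?_⟩
  have hπ : Real.pi ≠ 0 := Real.pi_ne_zero
  have hh' : h ≠ 0 := ne_of_gt hh
  field_simp at hk ⊢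
  nlinarith [hk, Real.pi_pos]

end CDaux

namespace CDaux

lemma norm_exp_neg2 (u v : ℝ) :
    ‖Complex.exp (-2 * (Real.pi : ℂ) * Complex.I * (u : ℂ) * (v : ℂ))‖ = 1 := by
  have : -2 * (Real.pi : ℂ) * Complex.I * (u : ℂ) * (v : ℂ)
      = ((-2 * Real.pi * u * v : ℝ) : ℂ) * Complex.I := by push_cast; ring
  rw [this, Complex.norm_exp_ofReal_mul_I]

lemma integrable_mul_exp (m : ℝ → ℂ) (hm : Measurable m) (hmi : Integrable m) (w : ℝ) :
    Integrable (fun x : ℝ => m x * Complex.exp (-2 * (Real.pi : ℂ) * Complex.I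
      * (w : ℂ) * (x : ℂ))) := by
  have hb : Integrable (fun x : ℝ =>
      Complex.exp (-2 * (Real.pi : ℂ) * Complex.I * (w : ℂ) * (x : ℂ)) * m x) volume := by
    refine hmi.bdd_mul (c := 1) (Continuous.aestronglyMeasurable ?_) (Filter.Eventually.of_forall fun x => ?_)
    · fun_prop
    · rw [norm_exp_neg2]
  exact hb.congr (Filter.Eventually.of_forall fun x => mul_comm _ _)

end CDaux

open CDaux in
theorem central_differences_little_o_two_pow
    (h : ℝ) (hh : 0 < h)
    (m : ℝ → ℂ) (hm : Measurable m) (hmi : Integrable m)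
    (j : ℕ) (a : ℕ → ℂ) (N : ℕ → ℕ) (c : ℕ → ℝ)
    (hc : ∀ k ≤ j, ¬ ∃ ν : ℤ, c k = 1 / (2 * h) + (ν : ℝ) / h)
    (f : ℝ → ℂ)
    (hf : ∀ w : ℝ,
      f w = (∫ x : ℝ, m x * Complex.exp (-2 * (Real.pi : ℂ) * Complex.I * (w : ℂ) * (x : ℂ)))
        + ∑ k ∈ Finset.range (j + 1),
            a k * Complex.exp (-2 * (Real.pi : ℂ) * Complex.I * (c k : ℂ) * (w : ℂ))
              * (2 * (Real.pi : ℂ) * Complex.I * (w : ℂ)) ^ (N k))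
    (y : ℝ) :
    Tendsto (fun n : ℕ =>
        (∑ k ∈ Finset.range (n + 1),
          (n.choose k : ℂ) * (-1) ^ k * f (y + ((n : ℝ) / 2 - (k : ℝ)) * h)) / 2 ^ n)
      atTop (nhds 0) := by
  classical
  set lam : ℝ → ℂ := fun cc =>
    Complex.exp (-(Real.pi : ℂ) * Complex.I * (cc : ℂ) * (h : ℂ))
      - Complex.exp ((Real.pi : ℂ) * Complex.I * (cc : ℂ) * (h : ℂ)) with hlam
  set P : ℕ → ℂ[X] := fun t =>
    Polynomial.C (a t * (2 * (Real.pi : ℂ) * Complex.I) ^ (N t)) * Polynomial.X ^ (N t) with hP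
  set Gint : ℕ → ℂ := fun n =>
    (∫ x : ℝ, m x * Complex.exp (-2 * (Real.pi : ℂ) * Complex.I * (x : ℂ) * (y : ℂ))
      * (lam x) ^ n) / 2 ^ n with hGint
  set Gatom : ℕ → ℂ := fun n =>
    ∑ t ∈ Finset.range (j + 1),
      Complex.exp (-2 * (Real.pi : ℂ) * Complex.I * (c t : ℂ) * (y : ℂ))
        * ((((E (Complex.exp (-(Real.pi : ℂ) * Complex.I * (c t : ℂ) * (h : ℂ)))
              (Complex.exp ((Real.pi : ℂ) * Complex.I * (c t : ℂ) * (h : ℂ)))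
              ((h : ℂ) / 2)) ^ n) (P t)).eval (y : ℂ) / 2 ^ n) with hGatom
  have hEq : ∀ n : ℕ,
      (∑ k ∈ Finset.range (n + 1),
          (n.choose k : ℂ) * (-1) ^ k * f (y + ((n : ℝ) / 2 - (k : ℝ)) * h)) / 2 ^ n
        = Gint n + Gatom n := by
    intro n
    have hsplit : (∑ k ∈ Finset.range (n + 1),
        (n.choose k : ℂ) * (-1) ^ k * f (y + ((n : ℝ) / 2 - (k : ℝ)) * h))
      = (∑ k ∈ Finset.range (n + 1), (n.choose k : ℂ) * (-1) ^ k
          * (∫ x : ℝ, m x * Complex.exp (-2 * (Real.pi : ℂ) * Complex.I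
              * ((y + ((n : ℝ) / 2 - (k : ℝ)) * h : ℝ) : ℂ) * (x : ℂ))))
        + ∑ k ∈ Finset.range (n + 1), (n.choose k : ℂ) * (-1) ^ k
          * (∑ t ∈ Finset.range (j + 1),
              a t * Complex.exp (-2 * (Real.pi : ℂ) * Complex.I * (c t : ℂ)
                * ((y + ((n : ℝ) / 2 - (k : ℝ)) * h : ℝ) : ℂ))
              * (2 * (Real.pi : ℂ) * Complex.I
                * ((y + ((n : ℝ) / 2 - (k : ℝ)) * h : ℝ) : ℂ)) ^ (N t)) := by
      rw [← Finset.sum_add_distrib]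
      refine Finset.sum_congr rfl fun k _ => ?_
      rw [hf]
      ring
    rw [hsplit, add_div]
    congr 1
    · -- integral part
      have h1 : (∑ k ∈ Finset.range (n + 1), (n.choose k : ℂ) * (-1) ^ k
          * (∫ x : ℝ, m x * Complex.exp (-2 * (Real.pi : ℂ) * Complex.I
              * ((y + ((n : ℝ) / 2 - (k : ℝ)) * h : ℝ) : ℂ) * (x : ℂ))))
          = ∫ x : ℝ, m x * Complex.exp (-2 * (Real.pi : ℂ) * Complex.I * (x : ℂ) * (y : ℂ))
              * (lam x) ^ n := by
        calc (∑ k ∈ Finset.range (n + 1), (n.choose k : ℂ) * (-1) ^ k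
            * (∫ x : ℝ, m x * Complex.exp (-2 * (Real.pi : ℂ) * Complex.I
                * ((y + ((n : ℝ) / 2 - (k : ℝ)) * h : ℝ) : ℂ) * (x : ℂ))))
            = ∑ k ∈ Finset.range (n + 1), ∫ x : ℝ, (n.choose k : ℂ) * (-1) ^ k
              * (m x * Complex.exp (-2 * (Real.pi : ℂ) * Complex.I
                * ((y + ((n : ℝ) / 2 - (k : ℝ)) * h : ℝ) : ℂ) * (x : ℂ))) := by
              simp only [MeasureTheory.integral_const_mul]
          _ = ∫ x : ℝ, ∑ k ∈ Finset.range (n + 1), (n.choose k : ℂ) * (-1) ^ k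
              * (m x * Complex.exp (-2 * (Real.pi : ℂ) * Complex.I
                * ((y + ((n : ℝ) / 2 - (k : ℝ)) * h : ℝ) : ℂ) * (x : ℂ))) :=
              (MeasureTheory.integral_finset_sum _ (fun k _ =>
                (integrable_mul_exp m hm hmi _).const_mul _)).symm
          _ = ∫ x : ℝ, m x * Complex.exp (-2 * (Real.pi : ℂ) * Complex.I * (x : ℂ) * (y : ℂ))
              * (lam x) ^ n := by
              refine MeasureTheory.integral_congr_ae (Filter.Eventually.of_forall fun x => ?_)
              have hks := keysum h y x 1 n
              rw [En_one] at hks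
              simp only [Polynomial.eval_one, Polynomial.eval_C, mul_one] at hks
              calc ∑ k ∈ Finset.range (n + 1), (n.choose k : ℂ) * (-1) ^ k
                  * (m x * Complex.exp (-2 * (Real.pi : ℂ) * Complex.I
                    * ((y + ((n : ℝ) / 2 - (k : ℝ)) * h : ℝ) : ℂ) * (x : ℂ)))
                  = m x * ∑ k ∈ Finset.range (n + 1), (n.choose k : ℂ) * (-1) ^ k
                    * Complex.exp (-2 * (Real.pi : ℂ) * Complex.I * (x : ℂ)
                      * ((y + ((n : ℝ) / 2 - (k : ℝ)) * h : ℝ) : ℂ)) := by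
                    rw [Finset.mul_sum]
                    refine Finset.sum_congr rfl fun k _ => ?_
                    have hccom : Complex.exp (-2 * (Real.pi : ℂ) * Complex.I
                        * ((y + ((n : ℝ) / 2 - (k : ℝ)) * h : ℝ) : ℂ) * (x : ℂ))
                        = Complex.exp (-2 * (Real.pi : ℂ) * Complex.I * (x : ℂ)
                        * ((y + ((n : ℝ) / 2 - (k : ℝ)) * h : ℝ) : ℂ)) := by
                      congr 1
                      ring
                    rw [hccom]
                    ring
                _ = m x * Complex.exp (-2 * (Real.pi : ℂ) * Complex.I * (x : ℂ) * (y : ℂ))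
                    * (lam x) ^ n := by
                    rw [hks, hlam]
                    ring
      rw [h1, hGint]
    · -- atom part
      rw [hGatom]
      calc (∑ k ∈ Finset.range (n + 1), (n.choose k : ℂ) * (-1) ^ k
          * (∑ t ∈ Finset.range (j + 1),
              a t * Complex.exp (-2 * (Real.pi : ℂ) * Complex.I * (c t : ℂ)
                * ((y + ((n : ℝ) / 2 - (k : ℝ)) * h : ℝ) : ℂ))
              * (2 * (Real.pi : ℂ) * Complex.I
                * ((y + ((n : ℝ) / 2 - (k : ℝ)) * h : ℝ) : ℂ)) ^ (N t))) / 2 ^ n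
          = (∑ t ∈ Finset.range (j + 1), ∑ k ∈ Finset.range (n + 1),
              (n.choose k : ℂ) * (-1) ^ k
              * (a t * Complex.exp (-2 * (Real.pi : ℂ) * Complex.I * (c t : ℂ)
                * ((y + ((n : ℝ) / 2 - (k : ℝ)) * h : ℝ) : ℂ))
              * (2 * (Real.pi : ℂ) * Complex.I
                * ((y + ((n : ℝ) / 2 - (k : ℝ)) * h : ℝ) : ℂ)) ^ (N t))) / 2 ^ n := by
            rw [Finset.sum_comm]
            congr 1
            exact Finset.sum_congr rfl fun k _ => Finset.mul_sum _ _ _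
        _ = ∑ t ∈ Finset.range (j + 1), (∑ k ∈ Finset.range (n + 1),
              (n.choose k : ℂ) * (-1) ^ k
              * (a t * Complex.exp (-2 * (Real.pi : ℂ) * Complex.I * (c t : ℂ)
                * ((y + ((n : ℝ) / 2 - (k : ℝ)) * h : ℝ) : ℂ))
              * (2 * (Real.pi : ℂ) * Complex.I
                * ((y + ((n : ℝ) / 2 - (k : ℝ)) * h : ℝ) : ℂ)) ^ (N t))) / 2 ^ n :=
            Finset.sum_div _ _ _
        _ = ∑ t ∈ Finset.range (j + 1),
              Complex.exp (-2 * (Real.pi : ℂ) * Complex.I * (c t : ℂ) * (y : ℂ))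
                * ((((E (Complex.exp (-(Real.pi : ℂ) * Complex.I * (c t : ℂ) * (h : ℂ)))
                      (Complex.exp ((Real.pi : ℂ) * Complex.I * (c t : ℂ) * (h : ℂ)))
                      ((h : ℂ) / 2)) ^ n) (P t)).eval (y : ℂ) / 2 ^ n) := by
            refine Finset.sum_congr rfl fun t _ => ?_
            have hterm : ∑ k ∈ Finset.range (n + 1), (n.choose k : ℂ) * (-1) ^ k
                * (a t * Complex.exp (-2 * (Real.pi : ℂ) * Complex.I * (c t : ℂ)
                  * ((y + ((n : ℝ) / 2 - (k : ℝ)) * h : ℝ) : ℂ))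
                * (2 * (Real.pi : ℂ) * Complex.I
                  * ((y + ((n : ℝ) / 2 - (k : ℝ)) * h : ℝ) : ℂ)) ^ (N t))
                = ∑ k ∈ Finset.range (n + 1), (n.choose k : ℂ) * (-1) ^ k
                  * Complex.exp (-2 * (Real.pi : ℂ) * Complex.I * (c t : ℂ)
                    * ((y + ((n : ℝ) / 2 - (k : ℝ)) * h : ℝ) : ℂ))
                  * (P t).eval ((y + ((n : ℝ) / 2 - (k : ℝ)) * h : ℝ) : ℂ) := by
              refine Finset.sum_congr rfl fun k _ => ?_
              rw [hP]
              simp only [Polynomial.eval_mul, Polynomial.eval_C, Polynomial.eval_pow,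
                Polynomial.eval_X]
              rw [mul_pow]
              ring
            rw [hterm, keysum h y (c t) (P t) n, mul_div_assoc]
  -- now the two limits
  have hint_tendsto : Tendsto Gint atTop (𝓝 0) := by
    rw [hGint]
    have hdct : Tendsto (fun n : ℕ => ∫ x : ℝ,
        (m x * Complex.exp (-2 * (Real.pi : ℂ) * Complex.I * (x : ℂ) * (y : ℂ))
          * (lam x) ^ n) / 2 ^ n) atTop (𝓝 (∫ _ : ℝ, (0:ℂ))) := by
      refine MeasureTheory.tendsto_integral_of_dominated_convergence
        (fun x => ‖m x‖) (fun n => ?_) hmi.norm (fun n => ?_) ?_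
      · -- measurability
        apply Measurable.aestronglyMeasurable
        apply Measurable.div_const
        apply Measurable.mul
        apply Measurable.mul hm
        · exact (Complex.measurable_exp.comp (by fun_prop))
        · exact (Complex.measurable_exp.comp (by fun_prop)).sub
            (Complex.measurable_exp.comp (by fun_prop)) |>.pow_const n
      · -- bound
        refine Filter.Eventually.of_forall fun x => ?_
        have hval : ‖(m x * Complex.exp (-2 * (Real.pi : ℂ) * Complex.I * (x : ℂ) * (y : ℂ))
            * (lam x) ^ n) / 2 ^ n‖
            = ‖m x‖ * 1 * (‖lam x‖ / 2) ^ n := by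
          rw [norm_div, norm_mul, norm_mul, norm_pow, norm_exp_neg2, norm_pow,
            Complex.norm_ofNat, div_pow]
          ring
        rw [hval]
        have h1 : ‖lam x‖ / 2 = |Real.sin (Real.pi * x * h)| := by
          rw [hlam]
          simp only
          rw [norm_zp_sub_zm]
          ring
        have h2 : (‖lam x‖ / 2) ^ n ≤ 1 := by
          rw [h1]
          exact pow_le_one₀ (abs_nonneg _) (abs_le.mpr ⟨Real.neg_one_le_sin _, Real.sin_le_one _⟩)
        calc ‖m x‖ * 1 * (‖lam x‖ / 2) ^ n ≤ ‖m x‖ * 1 * 1 := by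
              apply mul_le_mul_of_nonneg_left h2
              positivity
          _ = ‖m x‖ := by ring
      · -- a.e. limit
        have hae : ∀ᵐ x : ℝ, Real.cos (Real.pi * x * h) ≠ 0 := by
          rw [MeasureTheory.ae_iff]
          have hset : {x : ℝ | ¬ Real.cos (Real.pi * x * h) ≠ 0}
              = {x : ℝ | Real.cos (Real.pi * x * h) = 0} := by
            ext x; simp
          rw [hset]
          refine Set.Countable.measure_zero ?_ _
          refine Set.Countable.mono ?_ (Set.countable_range
            (fun k : ℤ => ((2 * (k:ℝ) + 1) * Real.pi / 2) / (Real.pi * h)))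
          intro x hx
          obtain ⟨k, hk⟩ := Real.cos_eq_zero_iff.mp hx
          refine ⟨k, ?_⟩
          have hπh : Real.pi * h ≠ 0 := by positivity
          have hk2 := mul_right_cancel₀ Real.pi_ne_zero
            (show (2 * (k:ℝ) + 1) * Real.pi = (2 * h * x) * Real.pi by linear_combination (-2) * hk)
          field_simp
          linarith [hk2]
        filter_upwards [hae] with x hx
        have h1 : ‖lam x / 2‖ < 1 := by
          rw [norm_div, hlam]
          simp only
          rw [norm_zp_sub_zm]
          have := abs_sin_lt_one hx
          rw [Complex.norm_ofNat]
          linarith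
        have h2 := (tendsto_pow_atTop_nhds_zero_of_norm_lt_one h1).const_mul
          (m x * Complex.exp (-2 * (Real.pi : ℂ) * Complex.I * (x : ℂ) * (y : ℂ)))
        rw [mul_zero] at h2
        refine h2.congr fun n => ?_
        rw [div_pow]
        ring
    rw [MeasureTheory.integral_zero] at hdct
    refine hdct.congr fun n => ?_
    rw [MeasureTheory.integral_div]
  have hatom_tendsto : Tendsto Gatom atTop (𝓝 0) := by
    rw [hGatom]
    have h0 : (0:ℂ) = ∑ t ∈ Finset.range (j + 1), (0:ℂ) := by simp
    rw [h0]
    refine tendsto_finset_sum _ fun t ht => ?_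
    have htj : t ≤ j := Nat.lt_succ_iff.mp (Finset.mem_range.mp ht)
    have hcos : Real.cos (Real.pi * (c t) * h) ≠ 0 := cos_ne h hh (c t) (hc t htj)
    have hnorm : ‖Complex.exp (-(Real.pi : ℂ) * Complex.I * (c t : ℂ) * (h : ℂ))
        - Complex.exp ((Real.pi : ℂ) * Complex.I * (c t : ℂ) * (h : ℂ))‖ < 2 := by
      rw [norm_zp_sub_zm]
      have := abs_sin_lt_one hcos
      linarith
    have hkey := poly_key _ _ ((h:ℂ)/2) hnorm ((P t).natDegree + 1) (P t)
      (Nat.lt_succ_self _) (y : ℂ)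
    have := hkey.const_mul
      (Complex.exp (-2 * (Real.pi : ℂ) * Complex.I * (c t : ℂ) * (y : ℂ)))
    rw [mul_zero] at this
    exact this
  have := hint_tendsto.add hatom_tendsto
  rw [add_zero] at this
  exact this.congr fun n => (hEq n).symm
end
end

section
/- Let h > 0 be real. Let m : ℝ → ℂ be Lebesgue measurable and Lebesgue integrable, let j ∈ ℕ, let a₀,…,a_j ∈ ℂ, N₀,…,N_j ∈ ℕ, and c₀,…,c_j ∈ ℝ with c_k ∉ {ν/h : ν ∈ ℤ} for every k. Suppose f : ℝ → ℂ satisfies f(w) = ∫_ℝ m(x) e^{-2πi w x} dx + ∑_{k=0}^{j} a_k e^{-2πi c_k w} (2πi w)^{N_k} for every w ∈ ℝ. Then for every y ∈ ℝ, lim_{n→∞} (1/2^n) ∑_{k=0}^{n} (n choose k) f(y + k·h) = 0, i.e. ∑_{k=0}^{n} (n choose k) f(y + k·h) = o(2^n). -/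
open MeasureTheory Filter Finset Topology

noncomputable section

namespace FB

def T (z : ℂ) (m n : ℕ) : ℂ :=
  ∑ k ∈ Finset.range (n + 1), (n.choose k : ℂ) * z ^ k * (k : ℂ) ^ m

lemma T_zero (z : ℂ) (n : ℕ) : T z 0 n = (1 + z) ^ n := by
  rw [T, show (1:ℂ) + z = z + 1 by ring, add_pow]
  refine Finset.sum_congr rfl fun k hk => ?_
  simp; ring

lemma T_rec (z : ℂ) (m n : ℕ) :
    T z (m+1) (n+1) = ((n:ℂ)+1) * z * ∑ i ∈ Finset.range (m+1), (m.choose i : ℂ) * T z i n := by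
  rw [T, Finset.sum_range_succ']
  simp only [Nat.cast_zero, ne_eq, Nat.succ_ne_zero, not_false_eq_true, zero_pow, mul_zero,
    add_zero]
  have key : ∀ k ∈ Finset.range (n+1),
      ((n+1).choose (k+1) : ℂ) * z ^ (k+1) * ((k:ℂ)+1) ^ (m+1)
        = ((n:ℂ)+1) * z * ∑ i ∈ Finset.range (m+1),
            (m.choose i : ℂ) * ((n.choose k : ℂ) * z ^ k * (k : ℂ) ^ i) := by
    intro k hk
    have hnat : ((n+1 : ℕ) : ℂ) * (n.choose k : ℂ) = ((n+1).choose (k+1) : ℂ) * ((k+1 : ℕ) : ℂ) := by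
      exact_mod_cast congrArg (Nat.cast (R := ℂ)) (Nat.add_one_mul_choose_eq n k)
    push_cast at hnat
    have hpow : ((k:ℂ)+1) ^ m = ∑ i ∈ Finset.range (m+1), (m.choose i : ℂ) * (k:ℂ) ^ i := by
      rw [add_pow]
      refine Finset.sum_congr rfl fun i hi => ?_
      simp; ring
    calc ((n+1).choose (k+1) : ℂ) * z ^ (k+1) * ((k:ℂ)+1) ^ (m+1)
        = (((n+1).choose (k+1) : ℂ) * ((k:ℂ)+1)) * z ^ (k+1) * ((k:ℂ)+1) ^ m := by ring
      _ = (((n:ℂ)+1) * (n.choose k : ℂ)) * z ^ (k+1) * ((k:ℂ)+1) ^ m := by rw [← hnat]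
      _ = ((n:ℂ)+1) * z * ((n.choose k : ℂ) * z ^ k * (((k:ℂ)+1) ^ m)) := by ring
      _ = _ := by rw [hpow, Finset.mul_sum]; congr 1; refine Finset.sum_congr rfl fun i hi => ?_; ring
  push_cast
  calc (∑ k ∈ Finset.range (n+1), ((n+1).choose (k+1) : ℂ) * z ^ (k+1) * ((k:ℂ)+1) ^ (m+1))
      = ∑ k ∈ Finset.range (n+1), ((n:ℂ)+1) * z * ∑ i ∈ Finset.range (m+1),
          (m.choose i : ℂ) * ((n.choose k : ℂ) * z ^ k * (k : ℂ) ^ i) := Finset.sum_congr rfl key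
    _ = ((n:ℂ)+1) * z * ∑ k ∈ Finset.range (n+1), ∑ i ∈ Finset.range (m+1),
          (m.choose i : ℂ) * ((n.choose k : ℂ) * z ^ k * (k : ℂ) ^ i) := by rw [Finset.mul_sum]
    _ = ((n:ℂ)+1) * z * ∑ i ∈ Finset.range (m+1), (m.choose i : ℂ) * T z i n := by
        rw [Finset.sum_comm]
        congr 1
        refine Finset.sum_congr rfl fun i hi => ?_
        rw [T, Finset.mul_sum]

lemma T_bound (z : ℂ) (s : ℝ) (hs : 0 < s) (h1 : norm (1+z) ≤ s) (m : ℕ) :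
    ∃ C : ℝ, 0 < C ∧ ∀ i ≤ m, ∀ n : ℕ, norm (T z i n) ≤ C * ((n:ℝ)+1)^i * s^n := by
  induction m with
  | zero =>
    refine ⟨1, one_pos, ?_⟩
    intro i hi n
    interval_cases i
    rw [T_zero, norm_pow]
    have : norm (1+z) ^ n ≤ s ^ n := by gcongr
    simpa using this
  | succ m ih =>
    obtain ⟨C, hC, hCb⟩ := ih
    have hXnn : (0:ℝ) ≤ norm z * C * 2^m / s := by positivity
    have hCC : C ≤ C + norm z * C * 2^m / s := le_add_of_nonneg_right hXnn
    refine ⟨C + norm z * C * 2^m / s, by positivity, ?_⟩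
    intro i hi n
    have hn1 : (0:ℝ) ≤ (n:ℝ) + 1 := by positivity
    rcases Nat.lt_or_ge i (m+1) with hi' | hi'
    · calc norm (T z i n) ≤ C * ((n:ℝ)+1)^i * s^n := hCb i (Nat.lt_succ_iff.mp hi') n
        _ ≤ (C + norm z * C * 2^m / s) * ((n:ℝ)+1)^i * s^n := by
            exact mul_le_mul_of_nonneg_right
              (mul_le_mul_of_nonneg_right hCC (by positivity)) (by positivity)
    · have hieq : i = m + 1 := le_antisymm hi hi'
      subst hieq
      match n with
      | 0 =>
        have h0 : T z (m+1) 0 = 0 := by simp [T]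
        rw [h0]
        simp only [norm_zero]
        positivity
      | (n+1) =>
        push_cast
        rw [T_rec]
        have hS : norm (∑ i ∈ Finset.range (m+1), (m.choose i : ℂ) * T z i n)
            ≤ 2^m * C * ((n:ℝ)+1)^m * s^n := by
          calc norm (∑ i ∈ Finset.range (m+1), (m.choose i : ℂ) * T z i n)
              ≤ ∑ i ∈ Finset.range (m+1), norm ((m.choose i : ℂ) * T z i n) :=
                norm_sum_le _ _
            _ ≤ ∑ i ∈ Finset.range (m+1), (m.choose i : ℝ) * (C * ((n:ℝ)+1)^m * s^n) := by
                refine Finset.sum_le_sum fun i hi2 => ?_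
                rw [norm_mul, Complex.norm_natCast]
                have him : i ≤ m := Nat.lt_succ_iff.mp (Finset.mem_range.mp hi2)
                have hpw : ((n:ℝ)+1)^i ≤ ((n:ℝ)+1)^m := by
                  apply pow_le_pow_right₀ (by linarith [Nat.cast_nonneg (α := ℝ) n]) him
                have h2 : norm (T z i n) ≤ C * ((n:ℝ)+1)^m * s^n := by
                  refine le_trans (hCb i him n) ?_
                  exact mul_le_mul_of_nonneg_right
                    (mul_le_mul_of_nonneg_left hpw hC.le) (by positivity)
                exact mul_le_mul_of_nonneg_left h2 (Nat.cast_nonneg _)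
            _ = (∑ i ∈ Finset.range (m+1), (m.choose i : ℝ)) * (C * ((n:ℝ)+1)^m * s^n) := by
                rw [← Finset.sum_mul]
            _ = 2^m * C * ((n:ℝ)+1)^m * s^n := by
                have hsum : (∑ i ∈ Finset.range (m+1), (m.choose i : ℝ)) = 2^m := by
                  rw [← Nat.cast_sum]
                  norm_cast
                  exact Nat.sum_range_choose m
                rw [hsum]; ring
        have habs1 : norm ((n:ℂ)+1) = (n:ℝ)+1 := by
          rw [show ((n:ℂ)+1) = ((n+1:ℕ):ℂ) by push_cast; ring, Complex.norm_natCast]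
          push_cast; ring
        calc norm (((n:ℂ)+1) * z * ∑ i ∈ Finset.range (m+1), (m.choose i : ℂ) * T z i n)
            = ((n:ℝ)+1) * norm z * norm (∑ i ∈ Finset.range (m+1), (m.choose i : ℂ) * T z i n) := by
              rw [norm_mul, norm_mul, habs1]
          _ ≤ ((n:ℝ)+1) * norm z * (2^m * C * ((n:ℝ)+1)^m * s^n) :=
              mul_le_mul_of_nonneg_left hS (by positivity)
          _ = (norm z * C * 2^m / s) * ((n:ℝ)+1)^(m+1) * s^(n+1) := by
              field_simp
              ring
          _ ≤ (C + norm z * C * 2^m / s) * ((n:ℝ)+1+1)^(m+1) * s^(n+1) := by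
              have hb : ((n:ℝ)+1)^(m+1) ≤ ((n:ℝ)+1+1)^(m+1) := by
                gcongr <;> linarith
              have hfinal : (norm z * C * 2^m / s) * ((n:ℝ)+1)^(m+1)
                  ≤ (C + norm z * C * 2^m / s) * ((n:ℝ)+1+1)^(m+1) :=
                mul_le_mul (le_add_of_nonneg_left hC.le) hb (by positivity) (by positivity)
              exact mul_le_mul_of_nonneg_right hfinal (by positivity)

lemma T_tendsto (z : ℂ) (hz : norm (1+z) < 2) (m : ℕ) :
    Tendsto (fun n : ℕ => T z m n / 2^n) atTop (𝓝 0) := by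
  set s : ℝ := (norm (1+z) + 2)/2 with hs_def
  have habs : 0 ≤ norm (1+z) := norm_nonneg _
  have hs0 : 0 < s := by rw [hs_def]; linarith
  have hle : norm (1+z) ≤ s := by rw [hs_def]; linarith
  have hs2 : s < 2 := by rw [hs_def]; linarith
  obtain ⟨C, hC, hCb⟩ := T_bound z s hs0 hle m
  have hq0 : 0 ≤ s/2 := by linarith
  have hq1 : s/2 < 1 := by linarith
  have hg : Tendsto (fun n : ℕ => C * (((n:ℝ)+1)^m * (s/2)^n)) atTop (𝓝 0) := by
    have h1 : Tendsto (fun n : ℕ => (n:ℝ)^m * (s/2)^n) atTop (𝓝 0) :=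
      tendsto_pow_const_mul_const_pow_of_lt_one m hq0 hq1
    have h2 : Tendsto (fun n : ℕ => ((n+1:ℕ):ℝ)^m * (s/2)^(n+1)) atTop (𝓝 0) :=
      h1.comp (tendsto_add_atTop_nat 1)
    have h3 := (h2.const_mul (C * (2/s)))
    rw [mul_zero] at h3
    refine h3.congr fun n => ?_
    push_cast
    have hss : (s/2)^(n+1) = (s/2)^n * (s/2) := pow_succ _ _
    rw [hss]
    field_simp
  refine squeeze_zero_norm (fun n => ?_) hg
  have h2n : ‖(2:ℂ)^n‖ = 2^n := by
    rw [norm_pow]; norm_num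
  rw [norm_div, h2n]
  rw [div_le_iff₀ (by positivity)]
  calc ‖T z m n‖ ≤ C * ((n:ℝ)+1)^m * s^n := hCb m le_rfl n
    _ = C * (((n:ℝ)+1)^m * (s/2)^n) * 2^n := by
        have h2 : ((s/2):ℝ)^n * (2:ℝ)^n = s^n := by
          rw [← mul_pow]; norm_num
        rw [← h2]; ring

lemma abs_one_add_lt_two {w : ℂ} (hw : norm w = 1) (hw1 : w ≠ 1) :
    norm (1 + w) < 2 := by
  have h1 : w.re * w.re + w.im * w.im = 1 := by
    have h2 := Complex.sq_norm w
    rw [hw] at h2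
    simpa [Complex.normSq_apply] using h2.symm
  have hre : w.re < 1 := by
    rcases lt_or_eq_of_le (show w.re ≤ 1 by nlinarith) with hlt | heq
    · exact hlt
    · exfalso
      apply hw1
      have him : w.im = 0 := by nlinarith
      apply Complex.ext <;> simp [← heq, him]
  have hsq : norm (1+w) ^ 2 = 2 + 2 * w.re := by
    rw [Complex.sq_norm, Complex.normSq_apply, Complex.add_re, Complex.add_im,
      Complex.one_re, Complex.one_im]
    linear_combination h1
  nlinarith [norm_nonneg (1+w)]

lemma abs_exp_eq_one (u v : ℝ) :
    norm (Complex.exp (-2 * (Real.pi:ℂ) * Complex.I * (u:ℂ) * (v:ℂ))) = 1 := by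
  rw [show (-2 * (Real.pi:ℂ) * Complex.I * (u:ℂ) * (v:ℂ))
      = ((-2 * Real.pi * u * v : ℝ):ℂ) * Complex.I by push_cast; ring]
  exact Complex.norm_exp_ofReal_mul_I _

lemma delta_tendsto (z B D : ℂ) (hz : norm (1+z) < 2) (M : ℕ) :
    Tendsto (fun n : ℕ =>
        (∑ k ∈ Finset.range (n+1), (n.choose k : ℂ) * (z^k * (B + D * k)^M)) / 2^n)
      atTop (𝓝 0) := by
  have hrw : ∀ n : ℕ, (∑ k ∈ Finset.range (n+1), (n.choose k : ℂ) * (z^k * (B + D * k)^M))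
      = ∑ p ∈ Finset.range (M+1), (D^p * B^(M-p) * (M.choose p : ℂ)) * T z p n := by
    intro n
    have hterm : ∀ k ∈ Finset.range (n+1), (n.choose k : ℂ) * (z^k * (B + D * k)^M)
        = ∑ p ∈ Finset.range (M+1),
            (D^p * B^(M-p) * (M.choose p : ℂ)) * ((n.choose k : ℂ) * z^k * (k:ℂ)^p) := by
      intro k hk
      rw [show B + D * (k:ℂ) = D * (k:ℂ) + B by ring, add_pow, Finset.mul_sum, Finset.mul_sum]
      refine Finset.sum_congr rfl fun p hp => ?_
      ring
    rw [Finset.sum_congr rfl hterm, Finset.sum_comm]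
    refine Finset.sum_congr rfl fun p hp => ?_
    rw [T, Finset.mul_sum]
  simp only [hrw]
  have htl := tendsto_finset_sum (Finset.range (M+1))
    (fun p (_ : p ∈ Finset.range (M+1)) =>
      ((T_tendsto z hz p).const_mul (D^p * B^(M-p) * (M.choose p : ℂ))))
  simp only [mul_zero, Finset.sum_const_zero] at htl
  refine htl.congr fun n => ?_
  rw [Finset.sum_div]
  refine Finset.sum_congr rfl fun p hp => ?_
  ring

lemma integral_tendsto (h : ℝ) (hh : 0 < h) (m : ℝ → ℂ) (hm : Measurable m)
    (hmi : Integrable m) (y : ℝ) :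
    Tendsto (fun n : ℕ =>
      (∑ k ∈ Finset.range (n+1), (n.choose k : ℂ) *
        ∫ x : ℝ, m x * Complex.exp
          (-2 * (Real.pi:ℂ) * Complex.I * ((y + (k:ℝ)*h : ℝ):ℂ) * (x:ℂ))) / 2^n)
      atTop (𝓝 0) := by
  have hEmeas : ∀ w : ℝ, Measurable fun x : ℝ =>
      Complex.exp (-2 * (Real.pi:ℂ) * Complex.I * (w:ℂ) * (x:ℂ)) := fun w =>
    Complex.measurable_exp.comp (Complex.measurable_ofReal.const_mul _)
  have hint : ∀ w : ℝ, Integrable fun x : ℝ =>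
      m x * Complex.exp (-2 * (Real.pi:ℂ) * Complex.I * (w:ℂ) * (x:ℂ)) := by
    intro w
    have := hmi.bdd_mul ((hEmeas w).aestronglyMeasurable)
      (Eventually.of_forall fun x => (abs_exp_eq_one w x).le)
    exact this.congr (Eventually.of_forall fun x => mul_comm _ _)
  have key : ∀ n : ℕ,
      (∑ k ∈ Finset.range (n+1), (n.choose k : ℂ) *
        ∫ x : ℝ, m x * Complex.exp
          (-2 * (Real.pi:ℂ) * Complex.I * ((y + (k:ℝ)*h : ℝ):ℂ) * (x:ℂ)))
      = ∫ x : ℝ, m x * Complex.exp (-2 * (Real.pi:ℂ) * Complex.I * (y:ℂ) * (x:ℂ))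
          * (1 + Complex.exp (-2 * (Real.pi:ℂ) * Complex.I * (h:ℂ) * (x:ℂ)))^n := by
    intro n
    calc (∑ k ∈ Finset.range (n+1), (n.choose k : ℂ) *
            ∫ x : ℝ, m x * Complex.exp
              (-2 * (Real.pi:ℂ) * Complex.I * ((y + (k:ℝ)*h : ℝ):ℂ) * (x:ℂ)))
        = ∑ k ∈ Finset.range (n+1), ∫ x : ℝ, (n.choose k : ℂ) *
            (m x * Complex.exp
              (-2 * (Real.pi:ℂ) * Complex.I * ((y + (k:ℝ)*h : ℝ):ℂ) * (x:ℂ))) := by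
          refine Finset.sum_congr rfl fun k _ => ?_
          rw [integral_const_mul]
      _ = ∫ x : ℝ, ∑ k ∈ Finset.range (n+1), (n.choose k : ℂ) *
            (m x * Complex.exp
              (-2 * (Real.pi:ℂ) * Complex.I * ((y + (k:ℝ)*h : ℝ):ℂ) * (x:ℂ))) :=
          (integral_finset_sum _ (fun k _ => (hint _).const_mul _)).symm
      _ = _ := by
          refine integral_congr_ae (Eventually.of_forall fun x => ?_)
          have hb : ∑ k ∈ Finset.range (n+1), (n.choose k : ℂ) *
              (Complex.exp (-2 * (Real.pi:ℂ) * Complex.I * (h:ℂ) * (x:ℂ)))^k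
              = (1 + Complex.exp (-2 * (Real.pi:ℂ) * Complex.I * (h:ℂ) * (x:ℂ)))^n := by
            have := T_zero (Complex.exp (-2 * (Real.pi:ℂ) * Complex.I * (h:ℂ) * (x:ℂ))) n
            simpa [T] using this
          calc (∑ k ∈ Finset.range (n+1), (n.choose k : ℂ) *
                  (m x * Complex.exp
                    (-2 * (Real.pi:ℂ) * Complex.I * ((y + (k:ℝ)*h : ℝ):ℂ) * (x:ℂ))))
              = ∑ k ∈ Finset.range (n+1),
                  (m x * Complex.exp (-2 * (Real.pi:ℂ) * Complex.I * (y:ℂ) * (x:ℂ)))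
                  * ((n.choose k : ℂ) *
                    (Complex.exp (-2 * (Real.pi:ℂ) * Complex.I * (h:ℂ) * (x:ℂ)))^k) := by
                refine Finset.sum_congr rfl fun k _ => ?_
                have e1 : Complex.exp
                    (-2 * (Real.pi:ℂ) * Complex.I * ((y + (k:ℝ)*h : ℝ):ℂ) * (x:ℂ))
                    = Complex.exp (-2 * (Real.pi:ℂ) * Complex.I * (y:ℂ) * (x:ℂ))
                      * (Complex.exp (-2 * (Real.pi:ℂ) * Complex.I * (h:ℂ) * (x:ℂ)))^k := by
                  rw [← Complex.exp_nat_mul, ← Complex.exp_add]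
                  congr 1
                  push_cast
                  ring
                rw [e1]; ring
            _ = _ := by rw [← Finset.mul_sum, hb]
  have hnull : (volume (Set.range (fun ν : ℤ => (ν:ℝ)/h))) = 0 :=
    (Set.countable_range _).measure_zero _
  have hae : ∀ᵐ x : ℝ, x ∉ Set.range (fun ν : ℤ => (ν:ℝ)/h) := by
    rw [← measure_eq_zero_iff_ae_notMem] at *
    exact hnull
  have htend : Tendsto (fun n : ℕ => ∫ x : ℝ,
      m x * Complex.exp (-2 * (Real.pi:ℂ) * Complex.I * (y:ℂ) * (x:ℂ))
        * ((1 + Complex.exp (-2 * (Real.pi:ℂ) * Complex.I * (h:ℂ) * (x:ℂ)))/2)^n)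
      atTop (𝓝 0) := by
    have h0 : (0:ℂ) = ∫ _ : ℝ, (0:ℂ) := by simp
    rw [h0]
    refine tendsto_integral_of_dominated_convergence (fun x => ‖m x‖)
      (fun n => ?_) hmi.norm (fun n => Eventually.of_forall fun x => ?_) ?_
    · exact ((hm.mul (hEmeas y)).mul
        (((measurable_const.add (hEmeas h)).div_const 2).pow_const n)).aestronglyMeasurable
    · rw [norm_mul, norm_mul, norm_pow]
      have h1 : ‖Complex.exp (-2 * (Real.pi:ℂ) * Complex.I * (y:ℂ) * (x:ℂ))‖ = 1 := by
        rw [abs_exp_eq_one]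
      have h2 : ‖(1 + Complex.exp (-2 * (Real.pi:ℂ) * Complex.I * (h:ℂ) * (x:ℂ)))/2‖ ≤ 1 := by
        rw [norm_div]
        have := norm_add_le 1 (Complex.exp (-2 * (Real.pi:ℂ) * Complex.I * (h:ℂ) * (x:ℂ)))
        rw [norm_one, abs_exp_eq_one] at this
        simp only [Complex.norm_two]
        linarith [norm_nonneg (1 + Complex.exp (-2 * (Real.pi:ℂ) * Complex.I * (h:ℂ) * (x:ℂ)))]
      have h3 : ‖(1 + Complex.exp (-2 * (Real.pi:ℂ) * Complex.I * (h:ℂ) * (x:ℂ)))/2‖^n ≤ 1 :=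
        pow_le_one₀ (norm_nonneg _) h2
      rw [h1]
      calc ‖m x‖ * 1 * ‖(1 + Complex.exp (-2 * (Real.pi:ℂ) * Complex.I * (h:ℂ) * (x:ℂ)))/2‖^n
            ≤ ‖m x‖ * 1 * 1 := by
              refine mul_le_mul_of_nonneg_left h3 (by positivity)
        _ = ‖m x‖ := by ring
      -- fix: we rewrote h1? need to substitute h1 into goal
    · filter_upwards [hae] with x hx
      have hw1 : Complex.exp (-2 * (Real.pi:ℂ) * Complex.I * (h:ℂ) * (x:ℂ)) ≠ 1 := by
        intro hcontra
        obtain ⟨ν, hν⟩ := Complex.exp_eq_one_iff.mp hcontra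
        have hcancel : (2*(Real.pi:ℂ)*Complex.I) * ((h*x:ℝ):ℂ)
            = (2*(Real.pi:ℂ)*Complex.I) * (-(ν:ℂ)) := by
          push_cast at hν ⊢
          linear_combination -hν
        have hne : (2*(Real.pi:ℂ)*Complex.I) ≠ 0 :=
          mul_ne_zero (mul_ne_zero two_ne_zero
            (Complex.ofReal_ne_zero.mpr Real.pi_ne_zero)) Complex.I_ne_zero
        have := mul_left_cancel₀ hne hcancel
        have hxr : h * x = ((-ν : ℤ):ℝ) := by exact_mod_cast this
        exact hx ⟨-ν, by field_simp [hh.ne'] at hxr ⊢; linarith [hxr]⟩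
      have habs : ‖(1 + Complex.exp (-2 * (Real.pi:ℂ) * Complex.I * (h:ℂ) * (x:ℂ)))/2‖ < 1 := by
        rw [norm_div, Complex.norm_two]
        have := abs_one_add_lt_two (abs_exp_eq_one h x) hw1
        linarith
      have hp := tendsto_pow_atTop_nhds_zero_of_norm_lt_one habs
      have := hp.const_mul (m x * Complex.exp (-2 * (Real.pi:ℂ) * Complex.I * (y:ℂ) * (x:ℂ)))
      rw [mul_zero] at this
      exact this
  refine htend.congr fun n => ?_
  rw [key n, ← integral_div]
  refine integral_congr_ae (Eventually.of_forall fun x => ?_)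
  simp only [div_pow]
  ring

end FB

theorem forward_binomial_sum_little_o_two_pow
    (h : ℝ) (hh : 0 < h)
    (m : ℝ → ℂ) (hm : Measurable m) (hmi : Integrable m)
    (j : ℕ) (a : ℕ → ℂ) (N : ℕ → ℕ) (c : ℕ → ℝ)
    (hc : ∀ k ≤ j, ¬ ∃ ν : ℤ, c k = (ν : ℝ) / h)
    (f : ℝ → ℂ)
    (hf : ∀ w : ℝ,
      f w = (∫ x : ℝ, m x * Complex.exp (-2 * (Real.pi : ℂ) * Complex.I * (w : ℂ) * (x : ℂ)))
        + ∑ k ∈ Finset.range (j + 1),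
            a k * Complex.exp (-2 * (Real.pi : ℂ) * Complex.I * (c k : ℂ) * (w : ℂ))
              * (2 * (Real.pi : ℂ) * Complex.I * (w : ℂ)) ^ (N k))
    (y : ℝ) :
    Tendsto (fun n : ℕ =>
        (∑ k ∈ Finset.range (n + 1),
          (n.choose k : ℂ) * f (y + (k : ℝ) * h)) / 2 ^ n)
      atTop (nhds 0) := by
  have hdelta : ∀ l ∈ Finset.range (j+1), Tendsto (fun n : ℕ =>
      (∑ k ∈ Finset.range (n+1), (n.choose k : ℂ) *
        (a l * Complex.exp (-2 * (Real.pi:ℂ) * Complex.I * (c l : ℂ) * ((y + (k:ℝ)*h : ℝ):ℂ))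
          * (2 * (Real.pi:ℂ) * Complex.I * ((y + (k:ℝ)*h : ℝ):ℂ)) ^ (N l))) / 2^n)
      atTop (𝓝 0) := by
    intro l hl
    have hlj : l ≤ j := Nat.lt_succ_iff.mp (Finset.mem_range.mp hl)
    set z := Complex.exp (-2 * (Real.pi:ℂ) * Complex.I * (c l : ℂ) * (h:ℂ)) with hz_def
    have hz1 : z ≠ 1 := by
      intro hcontra
      rw [hz_def, Complex.exp_eq_one_iff] at hcontra
      obtain ⟨ν, hν⟩ := hcontra
      have hcancel : (2*(Real.pi:ℂ)*Complex.I) * ((c l * h : ℝ):ℂ)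
          = (2*(Real.pi:ℂ)*Complex.I) * (-(ν:ℂ)) := by
        push_cast at hν ⊢
        linear_combination -hν
      have hne : (2*(Real.pi:ℂ)*Complex.I) ≠ 0 :=
        mul_ne_zero (mul_ne_zero two_ne_zero
          (Complex.ofReal_ne_zero.mpr Real.pi_ne_zero)) Complex.I_ne_zero
      have h2 := mul_left_cancel₀ hne hcancel
      have hxr : c l * h = ((-ν : ℤ):ℝ) := by exact_mod_cast h2
      refine hc l hlj ⟨-ν, ?_⟩
      field_simp [hh.ne'] at hxr ⊢
      linarith [hxr]
    have hlt : norm (1+z) < 2 :=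
      FB.abs_one_add_lt_two (by rw [hz_def]; exact FB.abs_exp_eq_one (c l) h) hz1
    have hd := (FB.delta_tendsto z (2*(Real.pi:ℂ)*Complex.I*(y:ℂ))
        (2*(Real.pi:ℂ)*Complex.I*(h:ℂ)) hlt (N l)).const_mul
      (a l * Complex.exp (-2 * (Real.pi:ℂ) * Complex.I * (c l : ℂ) * (y:ℂ)))
    rw [mul_zero] at hd
    refine hd.congr fun n => ?_
    rw [mul_div_assoc']
    congr 1
    rw [Finset.mul_sum]
    refine Finset.sum_congr rfl fun k _ => ?_
    have e1 : Complex.exp (-2 * (Real.pi:ℂ) * Complex.I * (c l : ℂ) * ((y + (k:ℝ)*h : ℝ):ℂ))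
        = Complex.exp (-2 * (Real.pi:ℂ) * Complex.I * (c l : ℂ) * (y:ℂ)) * z^k := by
      rw [hz_def, ← Complex.exp_nat_mul, ← Complex.exp_add]
      congr 1
      push_cast
      ring
    have e2 : (2*(Real.pi:ℂ)*Complex.I*((y + (k:ℝ)*h : ℝ):ℂ))
        = 2*(Real.pi:ℂ)*Complex.I*(y:ℂ) + 2*(Real.pi:ℂ)*Complex.I*(h:ℂ) * (k:ℂ) := by
      push_cast
      ring
    rw [e1, e2]
    ring
  have hI := FB.integral_tendsto h hh m hm hmi y
  have hsum := tendsto_finset_sum (Finset.range (j+1)) hdelta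
  rw [Finset.sum_const_zero] at hsum
  have hadd := hI.add hsum
  rw [add_zero] at hadd
  refine hadd.congr fun n => ?_
  simp only [← Finset.sum_div, ← add_div]
  congr 1
  simp only [hf, mul_add, Finset.sum_add_distrib, Finset.mul_sum]
  congr 1
  exact Finset.sum_comm
end
end

section
/- Let h > 0 be real. Let m : ℝ → ℂ be Lebesgue measurable and Lebesgue integrable, let j ∈ ℕ, let a₀,…,a_j ∈ ℂ, N₀,…,N_j ∈ ℕ, and c₀,…,c_j ∈ ℝ with c_k ∉ {ν/h : ν ∈ ℤ} for every k. Suppose f : ℝ → ℂ satisfies f(w) = ∫_ℝ m(x) e^{-2πi w x} dx + ∑_{k=0}^{j} a_k e^{-2πi c_k w} (2πi w)^{N_k} for every w ∈ ℝ. Then for every y ∈ ℝ, lim_{n→∞} (1/2^n) ∑_{k=0}^{n} (n choose k) f(y + (n/2 − k)·h) = 0, i.e. ∑_{k=0}^{n} (n choose k) f(y + (n/2 − k)·h) = o(2^n). -/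
open MeasureTheory Filter Finset Topology

noncomputable section

open Finset

lemma A_rec (z : ℂ) (q n : ℕ) :
    ∑ i ∈ Finset.range (n+1+1), ((n+1).choose i : ℂ) * (i:ℂ)^(q+1) * z^i
    = ((n:ℂ)+1) * z * ∑ s ∈ Finset.range (q+1), (q.choose s : ℂ) *
        ∑ i ∈ Finset.range (n+1), (n.choose i : ℂ) * (i:ℂ)^s * z^i := by
  have key : ∀ i : ℕ, (((n+1).choose (i+1) : ℂ)) * ((i:ℂ)+1) = ((n:ℂ)+1) * (n.choose i : ℂ) := by
    intro i
    have h1 : (n+1) * n.choose i = (n+1).choose (i+1) * (i+1) := Nat.add_one_mul_choose_eq n i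
    have := congrArg (Nat.cast : ℕ → ℂ) h1
    push_cast at this
    linear_combination -this
  rw [Finset.sum_range_succ']
  have h0 : ((n+1).choose 0 : ℂ) * ((0:ℕ):ℂ)^(q+1) * z^0 = 0 := by simp
  rw [h0, add_zero]
  have RHS : ((n:ℂ)+1) * z * ∑ s ∈ Finset.range (q+1), (q.choose s : ℂ) *
        ∑ i ∈ Finset.range (n+1), (n.choose i : ℂ) * (i:ℂ)^s * z^i
      = ∑ i ∈ Finset.range (n+1), ((n:ℂ)+1) * z * (n.choose i : ℂ) * z^i *
          ∑ s ∈ Finset.range (q+1), (q.choose s : ℂ) * (i:ℂ)^s := by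
    rw [Finset.mul_sum]
    simp_rw [Finset.mul_sum]
    rw [Finset.sum_comm]
    congr 1; funext i
    apply Finset.sum_congr rfl
    intro s _
    ring
  rw [RHS]
  apply Finset.sum_congr rfl
  intro i _
  have hpow : ((i:ℂ)+1)^(q+1) = ((i:ℂ)+1)^q * ((i:ℂ)+1) := by ring
  have hbin : ((i:ℂ)+1)^q = ∑ s ∈ Finset.range (q+1), (q.choose s : ℂ) * (i:ℂ)^s := by
    rw [add_pow]
    apply Finset.sum_congr rfl
    intro s _
    simp [mul_comm]
  push_cast
  rw [hpow, hbin]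
  calc (((n+1).choose (i+1) : ℂ)) * ((∑ s ∈ Finset.range (q+1), (q.choose s : ℂ) * (i:ℂ)^s) * ((i:ℂ)+1)) * z^(i+1)
      = (((n+1).choose (i+1) : ℂ)) * ((i:ℂ)+1) * z * z^i * (∑ s ∈ Finset.range (q+1), (q.choose s : ℂ) * (i:ℂ)^s) := by ring
    _ = ((n:ℂ)+1) * (n.choose i : ℂ) * z * z^i * (∑ s ∈ Finset.range (q+1), (q.choose s : ℂ) * (i:ℂ)^s) := by rw [key]
    _ = ((n:ℂ)+1) * z * (n.choose i : ℂ) * z^i * ∑ s ∈ Finset.range (q+1), (q.choose s : ℂ) * (i:ℂ)^s := by ring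

open Filter Topology

lemma aux_poly_geom (d : ℕ) {ρ : ℝ} (h0 : 0 ≤ ρ) (h1 : ρ < 1) :
    Tendsto (fun n : ℕ => ((n:ℝ)+1)^d * ρ^n) atTop (nhds 0) := by
  have base := (tendsto_pow_const_mul_const_pow_of_lt_one d h0 h1).const_mul ((2:ℝ)^d)
  rw [mul_zero] at base
  apply squeeze_zero' (g := fun n : ℕ => (2:ℝ)^d * ((n:ℝ)^d * ρ^n)) _ _ base
  · filter_upwards with n; positivity
  · filter_upwards [Filter.eventually_ge_atTop 1] with n hn
    have h2 : ((n:ℝ)+1)^d ≤ (2*(n:ℝ))^d := by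
      gcongr
      have : (1:ℝ) ≤ (n:ℝ) := by exact_mod_cast hn
      linarith
    calc ((n:ℝ)+1)^d * ρ^n ≤ (2*(n:ℝ))^d * ρ^n := by gcongr
      _ = (2:ℝ)^d * ((n:ℝ)^d * ρ^n) := by rw [mul_pow]; ring

lemma A_tendsto (z : ℂ) (hz : ‖z‖ ≤ 1) (hz2 : ‖1 + z‖ < 2) (q : ℕ) :
    ∀ d : ℕ, Tendsto (fun n : ℕ => ((n:ℝ)+1)^d *
      ‖∑ i ∈ Finset.range (n+1), (n.choose i : ℂ) * (i:ℂ)^q * z^i‖ / 2^n) atTop (nhds 0) := by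
  induction q using Nat.strong_induction_on with
  | _ q IH =>
    match q with
    | 0 =>
      intro d
      have hsum : ∀ n : ℕ, ∑ i ∈ Finset.range (n+1), (n.choose i:ℂ)*(i:ℂ)^0*z^i = (z+1)^n := by
        intro n
        rw [add_pow]
        apply Finset.sum_congr rfl
        intro i _
        simp [mul_comm]
      have heq : ∀ n : ℕ, ((n:ℝ)+1)^d *
          ‖∑ i ∈ Finset.range (n+1), (n.choose i : ℂ) * (i:ℂ)^0 * z^i‖ / 2^n
          = ((n:ℝ)+1)^d * (‖z+1‖/2)^n := by
        intro n
        rw [hsum, norm_pow, div_pow, mul_div_assoc]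
      simp_rw [heq]
      apply aux_poly_geom
      · positivity
      · rw [div_lt_one (by norm_num)]
        rwa [add_comm] at hz2
    | (q+1) =>
      intro d
      rw [← tendsto_add_atTop_iff_nat 1]
      set A : ℕ → ℕ → ℝ := fun s n => ‖∑ i ∈ Finset.range (n+1), (n.choose i : ℂ) * (i:ℂ)^s * z^i‖ with hA
      have hApos : ∀ s n, 0 ≤ A s n := fun s n => norm_nonneg _
      have hbound : ∀ n : ℕ, A (q+1) (n+1) ≤ ((n:ℝ)+1) * ∑ s ∈ Finset.range (q+1), (q.choose s : ℝ) * A s n := by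
        intro n
        show ‖∑ i ∈ Finset.range (n+1+1), ((n+1).choose i : ℂ) * (i:ℂ)^(q+1) * z^i‖ ≤ _
        rw [A_rec z q n, norm_mul, norm_mul]
        have e1 : ‖(n:ℂ)+1‖ = (n:ℝ)+1 := by
          rw [show ((n:ℂ)+1) = ((n+1:ℕ):ℂ) by push_cast; ring, Complex.norm_natCast]
          push_cast; ring
        rw [e1]
        have e2 : ‖∑ s ∈ Finset.range (q+1), (q.choose s : ℂ) *
              ∑ i ∈ Finset.range (n+1), (n.choose i : ℂ) * (i:ℂ)^s * z^i‖
            ≤ ∑ s ∈ Finset.range (q+1), (q.choose s : ℝ) * A s n := by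
          refine (norm_sum_le _ _).trans (le_of_eq ?_)
          apply Finset.sum_congr rfl
          intro s _
          rw [norm_mul, Complex.norm_natCast]
        have e3 : ((n:ℝ)+1) * ‖z‖ ≤ ((n:ℝ)+1) * 1 := by
          apply mul_le_mul_of_nonneg_left hz (by positivity)
        calc ((n:ℝ)+1) * ‖z‖ * ‖∑ s ∈ Finset.range (q+1), (q.choose s : ℂ) *
              ∑ i ∈ Finset.range (n+1), (n.choose i : ℂ) * (i:ℂ)^s * z^i‖
            ≤ (((n:ℝ)+1) * 1) * (∑ s ∈ Finset.range (q+1), (q.choose s : ℝ) * A s n) := by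
              apply mul_le_mul e3 e2 (norm_nonneg _) (by positivity)
          _ = ((n:ℝ)+1) * ∑ s ∈ Finset.range (q+1), (q.choose s : ℝ) * A s n := by rw [mul_one]
      apply squeeze_zero' (g := fun n : ℕ => ∑ s ∈ Finset.range (q+1),
        ((2:ℝ)^d * (q.choose s : ℝ) / 2) * (((n:ℝ)+1)^(d+1) * A s n / 2^n))
      · filter_upwards with n
        exact div_nonneg (mul_nonneg (by positivity) (hApos _ _)) (by positivity)
      · filter_upwards with n
        have ecast : ((n+1:ℕ):ℝ) + 1 = (n:ℝ)+2 := by push_cast; ring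
        have key : (((n+1:ℕ):ℝ)+1)^d * A (q+1) (n+1) / 2^(n+1)
            ≤ (((n:ℝ)+2)^d * (((n:ℝ)+1) * ∑ s ∈ Finset.range (q+1), (q.choose s : ℝ) * A s n)) / 2^(n+1) := by
          rw [ecast, div_le_div_iff_of_pos_right (by positivity)]
          exact mul_le_mul_of_nonneg_left (hbound n) (by positivity)
        refine le_trans key ?_
        have expand : (((n:ℝ)+2)^d * (((n:ℝ)+1) * ∑ s ∈ Finset.range (q+1), (q.choose s : ℝ) * A s n)) / 2^(n+1)
            = ∑ s ∈ Finset.range (q+1), (((n:ℝ)+2)^d * (((n:ℝ)+1) * ((q.choose s : ℝ) * A s n))) / 2^(n+1) := by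
          rw [Finset.mul_sum, Finset.mul_sum, Finset.sum_div]
        rw [expand]
        apply Finset.sum_le_sum
        intro s _
        have h1 : ((n:ℝ)+2)^d ≤ (2:ℝ)^d * ((n:ℝ)+1)^d := by
          rw [← mul_pow]
          gcongr
          linarith
        have e : ((2:ℝ)^d * (q.choose s : ℝ) / 2) * (((n:ℝ)+1)^(d+1) * A s n / 2^n)
            = ((2:ℝ)^d * ((n:ℝ)+1)^d) * (((n:ℝ)+1) * ((q.choose s : ℝ) * A s n)) / 2^(n+1) := by
          rw [pow_succ ((n:ℝ)+1) d, pow_succ (2:ℝ) n]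
          field_simp
        rw [e, div_le_div_iff_of_pos_right (by positivity)]
        apply mul_le_mul_of_nonneg_right h1
        exact mul_nonneg (by positivity) (mul_nonneg (by positivity) (hApos s n))
      · have hts : Tendsto (fun n : ℕ => ∑ s ∈ Finset.range (q+1),
            ((2:ℝ)^d * (q.choose s : ℝ) / 2) * (((n:ℝ)+1)^(d+1) * A s n / 2^n)) atTop
            (𝓝 (∑ _s ∈ Finset.range (q+1), (0:ℝ))) := by
          apply tendsto_finset_sum
          intro s hs
          have ht := (IH s (Finset.mem_range.mp hs) (d+1)).const_mul ((2:ℝ)^d * (q.choose s : ℝ) / 2)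
          rw [mul_zero] at ht
          exact ht
        simpa using hts

lemma binom_exp_id (n : ℕ) (t yy hh : ℝ) :
    ∑ i ∈ Finset.range (n+1), (n.choose i : ℂ) *
      Complex.exp (-2 * (Real.pi:ℂ) * Complex.I * ((yy + ((n:ℝ)/2 - (i:ℝ)) * hh : ℝ) : ℂ) * (t:ℂ))
    = Complex.exp (-2 * (Real.pi:ℂ) * Complex.I * (yy:ℂ) * (t:ℂ)) *
        (2 * ((Real.cos (Real.pi * hh * t) : ℝ) : ℂ))^n := by
  set π : ℂ := (Real.pi : ℂ)
  set I : ℂ := Complex.I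
  have hterm : ∀ i ∈ Finset.range (n+1), (n.choose i : ℂ) *
      Complex.exp (-2 * π * I * ((yy + ((n:ℝ)/2 - (i:ℝ)) * hh : ℝ) : ℂ) * (t:ℂ))
      = (Complex.exp (-2 * π * I * (yy:ℂ) * (t:ℂ)) *
        (Complex.exp (-π * I * hh * t))^n) *
        ((Complex.exp (2 * π * I * hh * t))^i * (n.choose i : ℂ)) := by
    intro i _
    have harg : (-2 * π * I * ((yy + ((n:ℝ)/2 - (i:ℝ)) * hh : ℝ) : ℂ) * (t:ℂ))
        = (-2 * π * I * (yy:ℂ) * (t:ℂ)) + ((n:ℂ) * (-π * I * hh * t)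
          + (i:ℂ) * (2 * π * I * hh * t)) := by
      push_cast
      ring
    rw [harg, Complex.exp_add, Complex.exp_add, Complex.exp_nat_mul, Complex.exp_nat_mul]
    ring
  rw [Finset.sum_congr rfl hterm, ← Finset.mul_sum]
  have hbin : ∑ i ∈ Finset.range (n+1), (Complex.exp (2 * π * I * hh * t))^i * (n.choose i : ℂ)
      = (Complex.exp (2 * π * I * hh * t) + 1)^n := by
    rw [add_pow]
    apply Finset.sum_congr rfl
    intro i _
    simp
  rw [hbin]
  have cos2 : 2 * ((Real.cos (Real.pi * hh * t) : ℝ) : ℂ)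
      = Complex.exp (π * I * hh * t) + Complex.exp (-π * I * hh * t) := by
    rw [Complex.ofReal_cos, Complex.cos]
    have e1 : ((Real.pi * hh * t : ℝ) : ℂ) * I = π * I * hh * t := by push_cast; ring
    have e2 : -((Real.pi * hh * t : ℝ) : ℂ) * I = -π * I * hh * t := by push_cast; ring
    rw [e1, e2]
    ring
  rw [cos2]
  have key : Complex.exp (-π * I * hh * t) * (Complex.exp (2 * π * I * hh * t) + 1)
      = Complex.exp (π * I * hh * t) + Complex.exp (-π * I * hh * t) := by
    rw [mul_add, mul_one, ← Complex.exp_add]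
    congr 2
    ring
  calc Complex.exp (-2 * π * I * (yy:ℂ) * (t:ℂ)) * (Complex.exp (-π * I * hh * t))^n *
        (Complex.exp (2 * π * I * hh * t) + 1)^n
      = Complex.exp (-2 * π * I * (yy:ℂ) * (t:ℂ)) *
        (Complex.exp (-π * I * hh * t) * (Complex.exp (2 * π * I * hh * t) + 1))^n := by
        rw [mul_pow]; ring
    _ = Complex.exp (-2 * π * I * (yy:ℂ) * (t:ℂ)) *
        (Complex.exp (π * I * hh * t) + Complex.exp (-π * I * hh * t))^n := by rw [key]

lemma exp_norm_one (a b : ℝ) :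
    ‖Complex.exp (-2 * (Real.pi:ℂ) * Complex.I * (a:ℂ) * (b:ℂ))‖ = 1 := by
  have harg : (-2 * (Real.pi:ℂ) * Complex.I * (a:ℂ) * (b:ℂ))
      = ((-2 * Real.pi * a * b : ℝ) : ℂ) * Complex.I := by push_cast; ring
  rw [harg, Complex.norm_exp]
  simp

lemma part1 (h : ℝ) (hh : 0 < h) (m : ℝ → ℂ) (hm : Measurable m)
    (hmi : MeasureTheory.Integrable m) (y : ℝ) :
    Filter.Tendsto (fun n : ℕ => (∑ i ∈ Finset.range (n+1), (n.choose i : ℂ) *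
      ∫ x : ℝ, m x * Complex.exp (-2 * (Real.pi:ℂ) * Complex.I *
        ((y + ((n:ℝ)/2 - (i:ℝ)) * h : ℝ) : ℂ) * (x:ℂ))) / 2^n)
      Filter.atTop (nhds 0) := by
  have hInt : ∀ w : ℝ, MeasureTheory.Integrable
      (fun x : ℝ => m x * Complex.exp (-2 * (Real.pi:ℂ) * Complex.I * (w:ℂ) * (x:ℂ))) := by
    intro w
    have hb : MeasureTheory.Integrable
        (fun x : ℝ => Complex.exp (-2 * (Real.pi:ℂ) * Complex.I * (w:ℂ) * (x:ℂ)) * m x) := by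
      apply hmi.bdd_mul (c := 1)
      · apply Measurable.aestronglyMeasurable
        fun_prop
      · exact Filter.Eventually.of_forall (fun x => le_of_eq (exp_norm_one w x))
    simpa [mul_comm] using hb
  have heq : ∀ n : ℕ, (∑ i ∈ Finset.range (n+1), (n.choose i : ℂ) *
      ∫ x : ℝ, m x * Complex.exp (-2 * (Real.pi:ℂ) * Complex.I *
        ((y + ((n:ℝ)/2 - (i:ℝ)) * h : ℝ) : ℂ) * (x:ℂ))) / 2^n
      = ∫ x : ℝ, m x * Complex.exp (-2 * (Real.pi:ℂ) * Complex.I * (y:ℂ) * (x:ℂ)) *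
          ((Real.cos (Real.pi * h * x) : ℝ) : ℂ)^n := by
    intro n
    have step1 : ∑ i ∈ Finset.range (n+1), (n.choose i : ℂ) *
        ∫ x : ℝ, m x * Complex.exp (-2 * (Real.pi:ℂ) * Complex.I *
          ((y + ((n:ℝ)/2 - (i:ℝ)) * h : ℝ) : ℂ) * (x:ℂ))
        = ∫ x : ℝ, ∑ i ∈ Finset.range (n+1), (n.choose i : ℂ) *
          (m x * Complex.exp (-2 * (Real.pi:ℂ) * Complex.I *
            ((y + ((n:ℝ)/2 - (i:ℝ)) * h : ℝ) : ℂ) * (x:ℂ))) := by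
      rw [MeasureTheory.integral_finset_sum _ (fun i _ => (hInt _).const_mul _)]
      apply Finset.sum_congr rfl
      intro i _
      rw [MeasureTheory.integral_const_mul]
    have step2 : (∫ x : ℝ, ∑ i ∈ Finset.range (n+1), (n.choose i : ℂ) *
          (m x * Complex.exp (-2 * (Real.pi:ℂ) * Complex.I *
            ((y + ((n:ℝ)/2 - (i:ℝ)) * h : ℝ) : ℂ) * (x:ℂ))))
        = ∫ x : ℝ, m x * (Complex.exp (-2 * (Real.pi:ℂ) * Complex.I * (y:ℂ) * (x:ℂ)) *
            (2 * ((Real.cos (Real.pi * h * x) : ℝ) : ℂ))^n) := by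
      congr 1
      funext x
      rw [← binom_exp_id n x y h, Finset.mul_sum]
      apply Finset.sum_congr rfl
      intro i _
      ring
    rw [step1, step2, ← MeasureTheory.integral_div]
    congr 1
    funext x
    have h2 : ((2:ℂ))^n ≠ 0 := pow_ne_zero _ two_ne_zero
    field_simp
    ring
  have hDCT : Filter.Tendsto (fun n : ℕ => ∫ x : ℝ,
      m x * Complex.exp (-2 * (Real.pi:ℂ) * Complex.I * (y:ℂ) * (x:ℂ)) *
        ((Real.cos (Real.pi * h * x) : ℝ) : ℂ)^n) Filter.atTop (nhds 0) := by
    have h0 : (0:ℂ) = ∫ _x : ℝ, (0:ℂ) := by simp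
    rw [h0]
    apply MeasureTheory.tendsto_integral_of_dominated_convergence (fun x => ‖m x‖)
    · intro n
      apply Measurable.aestronglyMeasurable
      fun_prop
    · exact hmi.norm
    · intro n
      filter_upwards with x
      rw [norm_mul, norm_mul, exp_norm_one y x, mul_one, norm_pow, Complex.norm_real,
        Real.norm_eq_abs]
      calc ‖m x‖ * |Real.cos (Real.pi * h * x)|^n ≤ ‖m x‖ * 1 := by
            apply mul_le_mul_of_nonneg_left _ (norm_nonneg _)
            exact pow_le_one₀ (abs_nonneg _) (Real.abs_cos_le_one _)
        _ = ‖m x‖ := mul_one _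
    · have hS : MeasureTheory.volume (Set.range (fun ν : ℤ => (ν:ℝ)/h)) = 0 :=
        (Set.countable_range _).measure_zero _
      filter_upwards [MeasureTheory.measure_eq_zero_iff_ae_notMem.mp hS] with x hx
      have hcos : |Real.cos (Real.pi * h * x)| < 1 := by
        rcases lt_or_ge (|Real.cos (Real.pi * h * x)|) 1 with hlt | hge
        · exact hlt
        · exfalso
          have habs : |Real.cos (Real.pi * h * x)| = 1 :=
            le_antisymm (Real.abs_cos_le_one _) hge
          have hsin : Real.sin (Real.pi * h * x) = 0 := by
            have := Real.sin_sq_add_cos_sq (Real.pi * h * x)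
            have hc2 : Real.cos (Real.pi * h * x) ^ 2 = 1 := by
              rw [← sq_abs, habs]; norm_num
            nlinarith [Real.sin_sq_add_cos_sq (Real.pi * h * x)]
          obtain ⟨ν, hν⟩ := Real.sin_eq_zero_iff.mp hsin
          apply hx
          refine ⟨ν, ?_⟩
          have hπ : Real.pi ≠ 0 := Real.pi_ne_zero
          field_simp
          nlinarith [hν, Real.pi_pos]
      have hlim : Filter.Tendsto (fun n : ℕ => ((Real.cos (Real.pi * h * x) : ℝ) : ℂ)^n)
          Filter.atTop (nhds 0) := by
        apply tendsto_pow_atTop_nhds_zero_of_norm_lt_one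
        rwa [Complex.norm_real, Real.norm_eq_abs]
      have := hlim.const_mul (m x * Complex.exp (-2 * (Real.pi:ℂ) * Complex.I * (y:ℂ) * (x:ℂ)))
      rw [mul_zero] at this
      simpa [mul_assoc] using this
  exact (Filter.tendsto_congr heq).mpr hDCT

open Filter in
lemma part2 (h : ℝ) (hh : 0 < h) (y cc : ℝ) (Nk : ℕ)
    (hcc : ¬ ∃ ν : ℤ, cc = (ν:ℝ)/h) :
    Tendsto (fun n : ℕ => (∑ i ∈ Finset.range (n+1), (n.choose i : ℂ) *
      (Complex.exp (-2*(Real.pi:ℂ)*Complex.I*(cc:ℂ)*((y + ((n:ℝ)/2 - (i:ℝ))*h : ℝ):ℂ)) *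
       (2*(Real.pi:ℂ)*Complex.I*((y + ((n:ℝ)/2 - (i:ℝ))*h : ℝ):ℂ))^Nk)) / 2^n)
      atTop (nhds 0) := by
  have hπ := Real.pi_pos
  set z : ℂ := Complex.exp (((2*Real.pi*cc*h : ℝ):ℂ) * Complex.I) with hz
  set v : ℂ := 2*(Real.pi:ℂ)*Complex.I*(h:ℂ) with hv
  set u : ℕ → ℂ := fun n => 2*(Real.pi:ℂ)*Complex.I*((y + (n:ℝ)*h/2 : ℝ):ℂ) with hu
  set B : ℕ → ℂ := fun n => -2*(Real.pi:ℂ)*Complex.I*(cc:ℂ)*((y + (n:ℝ)*h/2 : ℝ):ℂ) with hB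
  have hznorm : ‖z‖ = 1 := by
    rw [hz, Complex.norm_exp]
    simp
  have hcos1 : Real.cos (2*Real.pi*cc*h) ≠ 1 := by
    intro hcth
    obtain ⟨k, hk⟩ := (Real.cos_eq_one_iff _).mp hcth
    apply hcc
    refine ⟨k, ?_⟩
    have hhne : h ≠ 0 := ne_of_gt hh
    field_simp
    nlinarith [hk]
  have h1z : ‖1 + z‖ < 2 := by
    have hzre : z = ((Real.cos (2*Real.pi*cc*h) : ℝ):ℂ) + ((Real.sin (2*Real.pi*cc*h) : ℝ):ℂ) * Complex.I := by
      rw [hz, Complex.exp_mul_I, Complex.ofReal_cos, Complex.ofReal_sin]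
    have e : (1:ℂ) + z = (((1 + Real.cos (2*Real.pi*cc*h) : ℝ)):ℂ) +
        ((Real.sin (2*Real.pi*cc*h) : ℝ):ℂ) * Complex.I := by
      rw [hzre]; push_cast; ring
    rw [e, Complex.norm_add_mul_I, Real.sqrt_lt' (by norm_num)]
    have hpy := Real.sin_sq_add_cos_sq (2*Real.pi*cc*h)
    have hclt : Real.cos (2*Real.pi*cc*h) < 1 :=
      lt_of_le_of_ne (Real.cos_le_one _) hcos1
    nlinarith
  -- the key algebraic identity
  have hid : ∀ n : ℕ, ∑ i ∈ Finset.range (n+1), (n.choose i : ℂ) *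
      (Complex.exp (-2*(Real.pi:ℂ)*Complex.I*(cc:ℂ)*((y + ((n:ℝ)/2 - (i:ℝ))*h : ℝ):ℂ)) *
       (2*(Real.pi:ℂ)*Complex.I*((y + ((n:ℝ)/2 - (i:ℝ))*h : ℝ):ℂ))^Nk)
      = ∑ p ∈ Finset.range (Nk+1), (Complex.exp (B n) * ((-v)^p * (u n)^(Nk-p) * (Nk.choose p : ℂ))) *
          (∑ i ∈ Finset.range (n+1), (n.choose i : ℂ) * (i:ℂ)^p * z^i) := by
    intro n
    have hterm : ∀ i ∈ Finset.range (n+1), (n.choose i : ℂ) *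
        (Complex.exp (-2*(Real.pi:ℂ)*Complex.I*(cc:ℂ)*((y + ((n:ℝ)/2 - (i:ℝ))*h : ℝ):ℂ)) *
         (2*(Real.pi:ℂ)*Complex.I*((y + ((n:ℝ)/2 - (i:ℝ))*h : ℝ):ℂ))^Nk)
        = ∑ p ∈ Finset.range (Nk+1), (Complex.exp (B n) * ((-v)^p * (u n)^(Nk-p) * (Nk.choose p : ℂ))) *
            ((n.choose i : ℂ) * (i:ℂ)^p * z^i) := by
      intro i _
      have hE : Complex.exp (-2*(Real.pi:ℂ)*Complex.I*(cc:ℂ)*((y + ((n:ℝ)/2 - (i:ℝ))*h : ℝ):ℂ))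
          = Complex.exp (B n) * z^i := by
        rw [hz, hB, ← Complex.exp_nat_mul, ← Complex.exp_add]
        congr 1
        push_cast
        ring
      have hW : (2*(Real.pi:ℂ)*Complex.I*((y + ((n:ℝ)/2 - (i:ℝ))*h : ℝ):ℂ)) = (-v)*(i:ℂ) + u n := by
        rw [hv, hu]
        push_cast
        ring
      rw [hE, hW, add_pow, Finset.mul_sum, Finset.mul_sum]
      apply Finset.sum_congr rfl
      intro p _
      rw [mul_pow (-v) ((i:ℂ)) p]
      ring
    rw [Finset.sum_congr rfl hterm, Finset.sum_comm]
    apply Finset.sum_congr rfl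
    intro p _
    rw [Finset.mul_sum]
  -- bounds
  set L : ℝ := 2*Real.pi*(|y| + h) with hL
  have hL0 : 0 < L := by
    rw [hL]
    have := abs_nonneg y
    positivity
  set M : ℝ := max 1 L with hM
  have hM1 : (1:ℝ) ≤ M := le_max_left _ _
  have hub : ∀ n : ℕ, ‖u n‖ ≤ L * ((n:ℝ)+1) := by
    intro n
    have e : u n = ((2*Real.pi*(y + (n:ℝ)*h/2) : ℝ):ℂ) * Complex.I := by
      rw [hu]; push_cast; ring
    rw [e, norm_mul, Complex.norm_I, mul_one, Complex.norm_real, Real.norm_eq_abs]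
    have h1 : |2*Real.pi*(y + (n:ℝ)*h/2)| ≤ 2*Real.pi*(|y| + (n:ℝ)*h/2) := by
      rw [abs_mul]
      have h2 : |2*Real.pi| = 2*Real.pi := abs_of_pos (by positivity)
      rw [h2]
      apply mul_le_mul_of_nonneg_left _ (by positivity)
      calc |y + (n:ℝ)*h/2| ≤ |y| + |(n:ℝ)*h/2| := abs_add_le _ _
        _ = |y| + (n:ℝ)*h/2 := by
            rw [abs_of_nonneg (show (0:ℝ) ≤ (n:ℝ)*h/2 from by positivity)]
    refine h1.trans ?_
    rw [hL]
    have hn0 : (0:ℝ) ≤ (n:ℝ) := Nat.cast_nonneg n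
    have h3 : |y| + (n:ℝ)*h/2 ≤ (|y| + h) * ((n:ℝ)+1) := by
      nlinarith [abs_nonneg y, mul_nonneg (abs_nonneg y) hn0, mul_nonneg hn0 hh.le]
    calc 2*Real.pi*(|y| + (n:ℝ)*h/2) ≤ 2*Real.pi*((|y| + h) * ((n:ℝ)+1)) :=
          mul_le_mul_of_nonneg_left h3 (by positivity)
      _ = 2*Real.pi*(|y| + h) * ((n:ℝ)+1) := by ring
  rw [tendsto_zero_iff_norm_tendsto_zero]
  apply squeeze_zero (g := fun n : ℕ => ∑ p ∈ Finset.range (Nk+1),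
      (‖v‖^p * (Nk.choose p : ℝ) * M^Nk) *
        (((n:ℝ)+1)^Nk * ‖∑ i ∈ Finset.range (n+1), (n.choose i : ℂ) * (i:ℂ)^p * z^i‖ / 2^n))
    (fun n => norm_nonneg _)
  · intro n
    have h2n : ‖(2:ℂ)^n‖ = (2:ℝ)^n := by
      rw [norm_pow]
      norm_num
    rw [norm_div, h2n, hid n]
    rw [div_le_iff₀ (by positivity)]
    calc ‖∑ p ∈ Finset.range (Nk+1), (Complex.exp (B n) * ((-v)^p * (u n)^(Nk-p) * (Nk.choose p : ℂ))) *
            (∑ i ∈ Finset.range (n+1), (n.choose i : ℂ) * (i:ℂ)^p * z^i)‖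
        ≤ ∑ p ∈ Finset.range (Nk+1), ‖(Complex.exp (B n) * ((-v)^p * (u n)^(Nk-p) * (Nk.choose p : ℂ))) *
            (∑ i ∈ Finset.range (n+1), (n.choose i : ℂ) * (i:ℂ)^p * z^i)‖ := norm_sum_le _ _
      _ ≤ ∑ p ∈ Finset.range (Nk+1), ((‖v‖^p * (Nk.choose p : ℝ) * M^Nk) *
            (((n:ℝ)+1)^Nk * ‖∑ i ∈ Finset.range (n+1), (n.choose i : ℂ) * (i:ℂ)^p * z^i‖ / 2^n)) * 2^n := by
          apply Finset.sum_le_sum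
          intro p hp
          have hBnorm : ‖Complex.exp (B n)‖ = 1 := by
            rw [hB]
            exact exp_norm_one cc (y + (n:ℝ)*h/2)
          simp only [norm_mul, norm_pow, norm_neg, hBnorm, one_mul, Complex.norm_natCast]
          have hun : ‖u n‖^(Nk-p) ≤ M^Nk * ((n:ℝ)+1)^Nk := by
            calc ‖u n‖^(Nk-p) ≤ (L * ((n:ℝ)+1))^(Nk-p) := by
                  apply pow_le_pow_left₀ (norm_nonneg _) (hub n)
              _ = L^(Nk-p) * ((n:ℝ)+1)^(Nk-p) := mul_pow _ _ _
              _ ≤ M^Nk * ((n:ℝ)+1)^Nk := by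
                  apply mul_le_mul
                  · calc L^(Nk-p) ≤ M^(Nk-p) := pow_le_pow_left₀ hL0.le (le_max_right 1 L) _
                      _ ≤ M^Nk := pow_le_pow_right₀ hM1 (Nat.sub_le _ _)
                  · exact pow_le_pow_right₀ (by linarith [Nat.cast_nonneg (α := ℝ) n]) (Nat.sub_le _ _)
                  · positivity
                  · positivity
          calc ‖v‖^p * ‖u n‖^(Nk-p) * (Nk.choose p : ℝ) *
                ‖∑ i ∈ Finset.range (n+1), (n.choose i : ℂ) * (i:ℂ)^p * z^i‖
              ≤ ‖v‖^p * (M^Nk * ((n:ℝ)+1)^Nk) * (Nk.choose p : ℝ) *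
                ‖∑ i ∈ Finset.range (n+1), (n.choose i : ℂ) * (i:ℂ)^p * z^i‖ := by
                apply mul_le_mul_of_nonneg_right _ (norm_nonneg _)
                apply mul_le_mul_of_nonneg_right _ (Nat.cast_nonneg _)
                exact mul_le_mul_of_nonneg_left hun (by positivity)
            _ = ((‖v‖^p * (Nk.choose p : ℝ) * M^Nk) *
                (((n:ℝ)+1)^Nk * ‖∑ i ∈ Finset.range (n+1), (n.choose i : ℂ) * (i:ℂ)^p * z^i‖ / 2^n)) * 2^n := by
                field_simp
      _ = (∑ p ∈ Finset.range (Nk+1), ((‖v‖^p * (Nk.choose p : ℝ) * M^Nk) *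
            (((n:ℝ)+1)^Nk * ‖∑ i ∈ Finset.range (n+1), (n.choose i : ℂ) * (i:ℂ)^p * z^i‖ / 2^n))) * 2^n := by
            rw [Finset.sum_mul]
  · have hts : Tendsto (fun n : ℕ => ∑ p ∈ Finset.range (Nk+1),
        (‖v‖^p * (Nk.choose p : ℝ) * M^Nk) *
          (((n:ℝ)+1)^Nk * ‖∑ i ∈ Finset.range (n+1), (n.choose i : ℂ) * (i:ℂ)^p * z^i‖ / 2^n))
        atTop (nhds (∑ _p ∈ Finset.range (Nk+1), (0:ℝ))) := by
      apply tendsto_finset_sum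
      intro p _
      have ht := (A_tendsto z (le_of_eq hznorm) h1z p Nk).const_mul (‖v‖^p * (Nk.choose p : ℝ) * M^Nk)
      rw [mul_zero] at ht
      exact ht
    simpa using hts

theorem central_binomial_sum_little_o_two_pow
    (h : ℝ) (hh : 0 < h)
    (m : ℝ → ℂ) (hm : Measurable m) (hmi : Integrable m)
    (j : ℕ) (a : ℕ → ℂ) (N : ℕ → ℕ) (c : ℕ → ℝ)
    (hc : ∀ k ≤ j, ¬ ∃ ν : ℤ, c k = (ν : ℝ) / h)
    (f : ℝ → ℂ)
    (hf : ∀ w : ℝ,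
      f w = (∫ x : ℝ, m x * Complex.exp (-2 * (Real.pi : ℂ) * Complex.I * (w : ℂ) * (x : ℂ)))
        + ∑ k ∈ Finset.range (j + 1),
            a k * Complex.exp (-2 * (Real.pi : ℂ) * Complex.I * (c k : ℂ) * (w : ℂ))
              * (2 * (Real.pi : ℂ) * Complex.I * (w : ℂ)) ^ (N k))
    (y : ℝ) :
    Tendsto (fun n : ℕ =>
        (∑ k ∈ Finset.range (n + 1),
          (n.choose k : ℂ) * f (y + ((n : ℝ) / 2 - (k : ℝ)) * h)) / 2 ^ n)
      atTop (nhds 0) := by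
  have key : ∀ n : ℕ, (∑ k ∈ Finset.range (n+1),
        (n.choose k : ℂ) * f (y + ((n:ℝ)/2 - (k:ℝ)) * h)) / 2^n
      = (∑ i ∈ Finset.range (n+1), (n.choose i : ℂ) *
          ∫ x : ℝ, m x * Complex.exp (-2*(Real.pi:ℂ)*Complex.I*
            ((y + ((n:ℝ)/2 - (i:ℝ))*h : ℝ):ℂ)*(x:ℂ))) / 2^n
        + ∑ k ∈ Finset.range (j+1), a k * ((∑ i ∈ Finset.range (n+1), (n.choose i : ℂ) *
            (Complex.exp (-2*(Real.pi:ℂ)*Complex.I*(c k:ℂ)*((y + ((n:ℝ)/2 - (i:ℝ))*h : ℝ):ℂ)) *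
             (2*(Real.pi:ℂ)*Complex.I*((y + ((n:ℝ)/2 - (i:ℝ))*h : ℝ):ℂ))^(N k))) / 2^n) := by
    intro n
    have hsplit : ∑ i ∈ Finset.range (n+1), (n.choose i : ℂ) * f (y + ((n:ℝ)/2 - (i:ℝ)) * h)
        = (∑ i ∈ Finset.range (n+1), (n.choose i : ℂ) *
            ∫ x : ℝ, m x * Complex.exp (-2*(Real.pi:ℂ)*Complex.I*
              ((y + ((n:ℝ)/2 - (i:ℝ))*h : ℝ):ℂ)*(x:ℂ)))
          + ∑ k ∈ Finset.range (j+1), a k * (∑ i ∈ Finset.range (n+1), (n.choose i : ℂ) *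
            (Complex.exp (-2*(Real.pi:ℂ)*Complex.I*(c k:ℂ)*((y + ((n:ℝ)/2 - (i:ℝ))*h : ℝ):ℂ)) *
             (2*(Real.pi:ℂ)*Complex.I*((y + ((n:ℝ)/2 - (i:ℝ))*h : ℝ):ℂ))^(N k))) := by
      calc ∑ i ∈ Finset.range (n+1), (n.choose i : ℂ) * f (y + ((n:ℝ)/2 - (i:ℝ)) * h)
          = ∑ i ∈ Finset.range (n+1), ((n.choose i : ℂ) *
              (∫ x : ℝ, m x * Complex.exp (-2*(Real.pi:ℂ)*Complex.I*
                ((y + ((n:ℝ)/2 - (i:ℝ))*h : ℝ):ℂ)*(x:ℂ)))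
            + ∑ k ∈ Finset.range (j+1), a k * ((n.choose i : ℂ) *
              (Complex.exp (-2*(Real.pi:ℂ)*Complex.I*(c k:ℂ)*((y + ((n:ℝ)/2 - (i:ℝ))*h : ℝ):ℂ)) *
               (2*(Real.pi:ℂ)*Complex.I*((y + ((n:ℝ)/2 - (i:ℝ))*h : ℝ):ℂ))^(N k)))) := by
            apply Finset.sum_congr rfl
            intro i _
            rw [hf (y + ((n:ℝ)/2 - (i:ℝ)) * h), mul_add, Finset.mul_sum]
            congr 1
            apply Finset.sum_congr rfl
            intro k _
            ring
        _ = (∑ i ∈ Finset.range (n+1), (n.choose i : ℂ) *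
              ∫ x : ℝ, m x * Complex.exp (-2*(Real.pi:ℂ)*Complex.I*
                ((y + ((n:ℝ)/2 - (i:ℝ))*h : ℝ):ℂ)*(x:ℂ)))
            + ∑ i ∈ Finset.range (n+1), ∑ k ∈ Finset.range (j+1), a k * ((n.choose i : ℂ) *
              (Complex.exp (-2*(Real.pi:ℂ)*Complex.I*(c k:ℂ)*((y + ((n:ℝ)/2 - (i:ℝ))*h : ℝ):ℂ)) *
               (2*(Real.pi:ℂ)*Complex.I*((y + ((n:ℝ)/2 - (i:ℝ))*h : ℝ):ℂ))^(N k))) :=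
            Finset.sum_add_distrib
        _ = _ := by
            congr 1
            rw [Finset.sum_comm]
            apply Finset.sum_congr rfl
            intro k _
            rw [Finset.mul_sum]
    rw [hsplit, add_div]
    congr 1
    rw [Finset.sum_div]
    apply Finset.sum_congr rfl
    intro k _
    rw [mul_div_assoc]
  rw [tendsto_congr key]
  have h1 := part1 h hh m hm hmi y
  have h2 : Tendsto (fun n : ℕ => ∑ k ∈ Finset.range (j+1),
      a k * ((∑ i ∈ Finset.range (n+1), (n.choose i : ℂ) *
        (Complex.exp (-2*(Real.pi:ℂ)*Complex.I*(c k:ℂ)*((y + ((n:ℝ)/2 - (i:ℝ))*h : ℝ):ℂ)) *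
         (2*(Real.pi:ℂ)*Complex.I*((y + ((n:ℝ)/2 - (i:ℝ))*h : ℝ):ℂ))^(N k))) / 2^n))
      atTop (nhds (∑ _k ∈ Finset.range (j+1), (0:ℂ))) := by
    apply tendsto_finset_sum
    intro k hk
    have ht := (part2 h hh y (c k) (N k) (hc k (Nat.lt_succ_iff.mp (Finset.mem_range.mp hk)))).const_mul (a k)
    rw [mul_zero] at ht
    exact ht
  have := h1.add h2
  simpa using this
end
end

section
/- Let c ≥ 0 and h > 0 be real, let z ∈ ℂ, and let N ∈ ℕ. Then lim_{n→∞} ∑_{k=0}^{n} (n choose k) (−1)^{n−k} e^{-c(z + k h)} (z + k h)^N = 0; that is, the n-th forward difference with step h of the function w ↦ e^{-c w} w^N, evaluated at z, tends to 0 as n → ∞. -/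
open MeasureTheory Filter Finset Topology

noncomputable section

lemma fd_pow_step (i : ℕ) :
    fwdDiff 1 (fun k : ℕ => (k:ℂ)^i) = fun k : ℕ => ∑ m ∈ range i, (i.choose m : ℂ) * (k:ℂ)^m := by
  funext k
  simp only [fwdDiff]
  push_cast
  rw [add_pow, Finset.sum_range_succ]
  simp [mul_comm]

lemma fd_iter_zero (t : ℕ) : (fwdDiff 1)^[t] (0 : ℕ → ℂ) = 0 := by
  induction t with
  | zero => rfl
  | succ t IH =>
    rw [Function.iterate_succ_apply,
      show (fwdDiff 1) (0 : ℕ → ℂ) = 0 from funext fun k => sub_self 0, IH]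

lemma fd_pow_zero (i : ℕ) : ∀ n, i < n → (fwdDiff 1)^[n] (fun k : ℕ => (k:ℂ)^i) = 0 := by
  induction i using Nat.strong_induction_on with
  | _ i IH =>
    intro n hn
    obtain ⟨n', rfl⟩ : ∃ n', n = n' + 1 := ⟨n - 1, (Nat.succ_pred_eq_of_pos (Nat.zero_lt_of_lt hn)).symm⟩
    rw [Function.iterate_succ_apply, fd_pow_step]
    have : (fun k : ℕ => ∑ m ∈ range i, (i.choose m : ℂ) * (k:ℂ)^m)
        = ∑ m ∈ range i, (i.choose m : ℂ) • (fun k : ℕ => (k:ℂ)^m) := by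
      funext k; simp [Finset.sum_apply]
    rw [this, fwdDiff_iter_finset_sum]
    refine Finset.sum_eq_zero fun m hm => ?_
    rw [fwdDiff_iter_const_smul, IH m (Finset.mem_range.mp hm)
      n' (lt_of_lt_of_le (Finset.mem_range.mp hm) (Nat.lt_succ_iff.mp hn)), smul_zero]

lemma fd_poly_zero (z w : ℂ) (N n : ℕ) (hn : N < n) :
    (fwdDiff 1)^[n] (fun k : ℕ => (z + (k:ℂ) * w)^N) = 0 := by
  have : (fun k : ℕ => (z + (k:ℂ) * w)^N)
      = ∑ i ∈ range (N+1), (z ^ i * w ^ (N - i) * (N.choose i : ℂ)) • (fun k : ℕ => (k:ℂ)^(N-i)) := by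
    funext k
    rw [Finset.sum_apply, add_pow]
    refine Finset.sum_congr rfl fun i hi => ?_
    simp [mul_pow]; ring
  rw [this, fwdDiff_iter_finset_sum]
  refine Finset.sum_eq_zero fun i hi => ?_
  rw [fwdDiff_iter_const_smul, fd_pow_zero (N-i) n (lt_of_le_of_lt (Nat.sub_le _ _) hn), smul_zero]

lemma choose_sum_shift (n : ℕ) (Q : ℕ → ℂ) :
    ∑ j ∈ range (n+2), ((n+1).choose j : ℂ) * Q j
      = ∑ j ∈ range (n+1), (n.choose j : ℂ) * Q j
        + ∑ j ∈ range (n+1), (n.choose j : ℂ) * Q (j+1) := by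
  rw [Finset.sum_range_succ' (fun j => ((n+1).choose j : ℂ) * Q j) (n+1)]
  simp only [Nat.choose_succ_succ, Nat.cast_add, add_mul, Finset.sum_add_distrib,
    Nat.choose_zero_right, Nat.cast_one, one_mul]
  have : ∑ j ∈ range (n+1), (n.choose j : ℂ) * Q j
      = (∑ i ∈ range (n+1), (n.choose (i+1) : ℂ) * Q (i+1)) + Q 0 := by
    rw [Finset.sum_range_succ (fun i => (n.choose (i+1) : ℂ) * Q (i+1)) n]
    rw [Nat.choose_succ_self, Nat.cast_zero, zero_mul, add_zero]
    rw [Finset.sum_range_succ' (fun j => (n.choose j : ℂ) * Q j) n,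
      Nat.choose_zero_right, Nat.cast_one, one_mul]
  rw [this]; ring

lemma fd_geom_mul (x : ℂ) (p : ℕ → ℂ) :
    ∀ (n m : ℕ), (fwdDiff 1)^[n] (fun k : ℕ => x^k * p k) m
      = x^m * ∑ j ∈ range (n+1), (n.choose j : ℂ)
          * ((x-1)^(n-j) * (fwdDiff 1)^[j] p (m + (n-j))) := by
  intro n
  induction n with
  | zero => intro m; simp
  | succ n IH =>
    intro m
    rw [Function.iterate_succ_apply']
    show (fwdDiff 1)^[n] (fun k : ℕ => x^k * p k) (m+1)
        - (fwdDiff 1)^[n] (fun k : ℕ => x^k * p k) m = _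
    rw [IH (m+1), IH m,
      choose_sum_shift n (fun j => (x-1)^(n+1-j) * (fwdDiff 1)^[j] p (m + (n+1-j)))]
    have h1 : (x-1) * (∑ j ∈ range (n+1), (n.choose j : ℂ)
          * ((x-1)^(n-j) * (fwdDiff 1)^[j] p (m+1 + (n-j))))
        = ∑ j ∈ range (n+1), (n.choose j : ℂ)
          * ((x-1)^(n+1-j) * (fwdDiff 1)^[j] p (m + (n+1-j))) := by
      rw [Finset.mul_sum]
      refine Finset.sum_congr rfl fun j hj => ?_
      have hjn : j ≤ n := Nat.lt_succ_iff.mp (Finset.mem_range.mp hj)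
      rw [show n + 1 - j = (n - j) + 1 by omega, show m + 1 + (n-j) = m + (n - j + 1) by omega]
      ring
    have h2 : (∑ j ∈ range (n+1), (n.choose j : ℂ)
          * ((x-1)^(n-j) * (fwdDiff 1)^[j] p (m+1 + (n-j))))
        - (∑ j ∈ range (n+1), (n.choose j : ℂ)
          * ((x-1)^(n-j) * (fwdDiff 1)^[j] p (m + (n-j))))
        = ∑ j ∈ range (n+1), (n.choose j : ℂ)
          * ((x-1)^(n+1-(j+1)) * (fwdDiff 1)^[j+1] p (m + (n+1-(j+1)))) := by
      rw [← Finset.sum_sub_distrib]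
      refine Finset.sum_congr rfl fun j hj => ?_
      rw [show n + 1 - (j+1) = n - j by omega, show m + 1 + (n-j) = (m + (n - j)) + 1 by omega,
        Function.iterate_succ_apply']
      show (n.choose j : ℂ) * ((x-1)^(n-j) * (fwdDiff 1)^[j] p (m + (n-j) + 1))
          - (n.choose j : ℂ) * ((x-1)^(n-j) * (fwdDiff 1)^[j] p (m + (n-j)))
        = (n.choose j : ℂ) * ((x-1)^(n-j)
          * ((fwdDiff 1)^[j] p (m + (n-j) + 1) - (fwdDiff 1)^[j] p (m + (n-j))))
      ring
    rw [← h1, ← h2]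
    ring

lemma fd_iter_norm_le (p : ℕ → ℂ) (M : ℝ) (j m n : ℕ) (hmn : m + j ≤ n)
    (hM : ∀ t, t ≤ n → ‖p t‖ ≤ M) : ‖(fwdDiff 1)^[j] p m‖ ≤ 2^j * M := by
  rw [fwdDiff_iter_eq_sum_shift]
  refine (norm_sum_le _ _).trans ?_
  have : ∀ i ∈ range (j+1),
      ‖((-1:ℤ)^(j-i) * j.choose i) • p (m + i • 1)‖ ≤ (j.choose i : ℝ) * M := by
    intro i hi
    rw [zsmul_eq_mul, norm_mul]
    have h1 : ‖(((-1:ℤ)^(j-i) * j.choose i : ℤ) : ℂ)‖ = (j.choose i : ℝ) := by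
      push_cast
      rw [norm_mul, norm_pow, norm_neg, norm_one, one_pow, one_mul]
      simp
    rw [h1]
    have : m + i • 1 ≤ n := by
      have := Finset.mem_range.mp hi
      simp only [smul_eq_mul, mul_one]
      omega
    exact mul_le_mul_of_nonneg_left (hM _ this) (Nat.cast_nonneg _)
  refine (Finset.sum_le_sum this).trans ?_
  rw [← Finset.sum_mul]
  have h2 : (∑ i ∈ range (j+1), (j.choose i : ℝ)) = 2^j := by
    rw [← Nat.cast_sum]
    rw [Nat.sum_range_choose]
    push_cast; ring
  rw [h2]

lemma exp_term_eq (c h : ℝ) (z : ℂ) (k : ℕ) :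
    Complex.exp (-(c:ℂ) * (z + (k:ℂ)*(h:ℂ)))
      = Complex.exp (-(c:ℂ)*z) * (Complex.exp (-(c:ℂ)*(h:ℂ)))^k := by
  rw [← Complex.exp_nat_mul, ← Complex.exp_add]
  congr 1
  ring

lemma sum_eq_fd (c h : ℝ) (z : ℂ) (N n : ℕ) :
    (∑ k ∈ Finset.range (n + 1), (n.choose k : ℂ) * (-1) ^ (n - k)
        * Complex.exp (-(c : ℂ) * (z + (k : ℂ) * (h : ℂ))) * (z + (k : ℂ) * (h : ℂ)) ^ N)
    = Complex.exp (-(c:ℂ)*z) * (fwdDiff 1)^[n]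
        (fun k : ℕ => (Complex.exp (-(c:ℂ)*(h:ℂ)))^k * (z + (k:ℂ)*(h:ℂ))^N) 0 := by
  rw [fwdDiff_iter_eq_sum_shift, Finset.mul_sum]
  refine Finset.sum_congr rfl fun k hk => ?_
  rw [exp_term_eq]
  simp only [zero_add, smul_eq_mul, mul_one, zsmul_eq_mul]
  push_cast
  ring

theorem forward_difference_exp_poly_tendsto_zero
    (c h : ℝ) (hc : 0 ≤ c) (hh : 0 < h) (z : ℂ) (N : ℕ) :
    Tendsto (fun n : ℕ =>
        ∑ k ∈ Finset.range (n + 1),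
          (n.choose k : ℂ) * (-1) ^ (n - k)
            * Complex.exp (-(c : ℂ) * (z + (k : ℂ) * (h : ℂ)))
            * (z + (k : ℂ) * (h : ℂ)) ^ N)
      atTop (nhds 0) := by
  have hvanish : ∀ j, N < j →
      (fwdDiff 1)^[j] (fun k : ℕ => (z + (k:ℂ)*(h:ℂ))^N) = 0 := by
    intro j hj
    obtain ⟨t, rfl⟩ : ∃ t, j = t + (N+1) := ⟨j - (N+1), by omega⟩
    rw [Function.iterate_add_apply, fd_poly_zero z (h:ℂ) N (N+1) (lt_add_one N), fd_iter_zero]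
  by_cases hc0 : c = 0
  · subst hc0
    refine Tendsto.congr' ?_ (tendsto_const_nhds (x := (0:ℂ)))
    filter_upwards [eventually_ge_atTop (N+1)] with n hn
    rw [sum_eq_fd]
    have hx1 : Complex.exp (-((0:ℝ):ℂ)*(h:ℂ)) = 1 := by norm_num
    have heq : (fun k : ℕ => (Complex.exp (-((0:ℝ):ℂ)*(h:ℂ)))^k * (z + (k:ℂ)*(h:ℂ))^N)
        = fun k : ℕ => (z + (k:ℂ)*(h:ℂ))^N := by
      funext k; rw [hx1, one_pow, one_mul]
    rw [heq, hvanish n (by omega), Pi.zero_apply, mul_zero]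
  · have hcpos : 0 < c := hc.lt_of_ne (Ne.symm hc0)
    set r : ℝ := 1 - Real.exp (-(c*h)) with hrdef
    have hch : 0 < c * h := mul_pos hcpos hh
    have hexp1 : Real.exp (-(c*h)) < 1 := Real.exp_lt_one_iff.mpr (by linarith)
    have hr0 : 0 < r := by rw [hrdef, sub_pos]; exact hexp1
    have hr1 : r < 1 := by
      rw [hrdef]
      have := Real.exp_pos (-(c*h))
      linarith
    have hxnorm : ‖Complex.exp (-(c:ℂ)*(h:ℂ)) - 1‖ = r := by
      have h1 : Complex.exp (-(c:ℂ)*(h:ℂ)) = ((Real.exp (-(c*h)) : ℝ) : ℂ) := by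
        rw [Complex.ofReal_exp]; congr 1; push_cast; ring
      rw [h1, show ((Real.exp (-(c*h)) : ℝ) : ℂ) - 1 = ((Real.exp (-(c*h)) - 1 : ℝ) : ℂ) by
          push_cast; ring,
        Complex.norm_real, Real.norm_eq_abs, abs_of_nonpos (by linarith), hrdef]
      ring
    refine squeeze_zero_norm'
      (a := fun n : ℕ => (‖Complex.exp (-(c:ℂ)*z)‖ * ((N+1 : ℝ) * 2^N * (‖z‖+h)^N / r^N))
        * ((n:ℝ)^(2*N) * r^n)) ?_ (by
      simpa using (tendsto_pow_const_mul_const_pow_of_lt_one (2*N) hr0.le hr1).const_mul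
        (‖Complex.exp (-(c:ℂ)*z)‖ * ((N+1 : ℝ) * 2^N * (‖z‖+h)^N / r^N)))
    filter_upwards [eventually_ge_atTop (N+1)] with n hn
    have hn1 : 1 ≤ n := by omega
    rw [sum_eq_fd,
      fd_geom_mul (Complex.exp (-(c:ℂ)*(h:ℂ))) (fun k : ℕ => (z + (k:ℂ)*(h:ℂ))^N) n 0]
    set x : ℂ := Complex.exp (-(c:ℂ)*(h:ℂ)) with hxdef
    set p : ℕ → ℂ := fun k : ℕ => (z + (k:ℂ)*(h:ℂ))^N with hpdef
    set M : ℝ := (‖z‖ + n*h)^N with hMdef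
    have hM : ∀ t, t ≤ n → ‖p t‖ ≤ M := by
      intro t ht
      rw [hpdef, hMdef]
      simp only [norm_pow]
      refine pow_le_pow_left₀ (norm_nonneg _) ?_ N
      refine (norm_add_le _ _).trans ?_
      rw [norm_mul, Complex.norm_natCast, Complex.norm_real, Real.norm_eq_abs,
        abs_of_nonneg hh.le]
      have h2 : (t:ℝ) * h ≤ (n:ℝ) * h := by
        have h3 : (t:ℝ) ≤ n := Nat.cast_le.mpr ht
        nlinarith
      linarith
    have hS : (∑ j ∈ range (n+1), (n.choose j : ℂ)
          * ((x-1)^(n-j) * (fwdDiff 1)^[j] p (0 + (n-j))))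
        = ∑ j ∈ range (N+1), (n.choose j : ℂ)
          * ((x-1)^(n-j) * (fwdDiff 1)^[j] p (0 + (n-j))) := by
      refine (Finset.sum_subset (Finset.range_subset_range.mpr (by omega)) ?_).symm
      intro j hj hj'
      rw [hvanish j (by
        simp only [Finset.mem_range] at hj'
        omega), Pi.zero_apply, mul_zero, mul_zero]
    rw [hS]
    have hterm : ∀ j ∈ range (N+1), ‖(n.choose j : ℂ)
          * ((x-1)^(n-j) * (fwdDiff 1)^[j] p (0 + (n-j)))‖
        ≤ (n:ℝ)^N * (r^(n-N) * (2^N * M)) := by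
      intro j hj
      have hjN : j ≤ N := Nat.lt_succ_iff.mp (Finset.mem_range.mp hj)
      rw [norm_mul, norm_mul, norm_pow, hxnorm, Complex.norm_natCast]
      have b1 : (n.choose j : ℝ) ≤ (n:ℝ)^N := by
        have : n.choose j ≤ n^N :=
          (Nat.choose_le_pow n j).trans (Nat.pow_le_pow_right hn1 hjN)
        exact_mod_cast this
      have b2 : r^(n-j) ≤ r^(n-N) :=
        pow_le_pow_of_le_one hr0.le hr1.le (by omega)
      have b3 : ‖(fwdDiff 1)^[j] p (0 + (n-j))‖ ≤ 2^N * M := by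
        refine (fd_iter_norm_le p M j (0 + (n-j)) n (by omega) hM).trans ?_
        have h4 : (2:ℝ)^j ≤ 2^N := pow_le_pow_right₀ one_le_two hjN
        have hM0 : 0 ≤ M := by rw [hMdef]; positivity
        nlinarith
      exact mul_le_mul b1 (mul_le_mul b2 b3 (norm_nonneg _) (by positivity))
        (by positivity) (by positivity)
    have hsum : ‖∑ j ∈ range (N+1), (n.choose j : ℂ)
          * ((x-1)^(n-j) * (fwdDiff 1)^[j] p (0 + (n-j)))‖
        ≤ ((N:ℝ)+1) * ((n:ℝ)^N * (r^(n-N) * (2^N * M))) := by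
      refine (norm_sum_le _ _).trans ((Finset.sum_le_sum hterm).trans ?_)
      rw [Finset.sum_const, Finset.card_range, nsmul_eq_mul]
      push_cast
      exact le_rfl
    rw [norm_mul, norm_mul, norm_pow, pow_zero, one_mul]
    have hMle : M ≤ (‖z‖+h)^N * (n:ℝ)^N := by
      rw [hMdef, ← mul_pow]
      refine pow_le_pow_left₀ (by positivity) ?_ N
      have hz : (0:ℝ) ≤ ‖z‖ := norm_nonneg _
      have h5 : (1:ℝ) ≤ (n:ℝ) := by exact_mod_cast hn1
      nlinarith
    have hrpow : r^(n-N) = r^n / r^N := by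
      rw [eq_div_iff (by positivity), ← pow_add]
      congr 1
      omega
    calc ‖Complex.exp (-(c:ℂ)*z)‖ * ‖∑ j ∈ range (N+1), (n.choose j : ℂ)
          * ((x-1)^(n-j) * (fwdDiff 1)^[j] p (0 + (n-j)))‖
        ≤ ‖Complex.exp (-(c:ℂ)*z)‖ * (((N:ℝ)+1) * ((n:ℝ)^N * (r^(n-N) * (2^N * M)))) :=
          mul_le_mul_of_nonneg_left hsum (norm_nonneg _)
      _ ≤ ‖Complex.exp (-(c:ℂ)*z)‖
            * (((N:ℝ)+1) * ((n:ℝ)^N * (r^(n-N) * (2^N * ((‖z‖+h)^N * (n:ℝ)^N))))) := by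
          gcongr
      _ = (‖Complex.exp (-(c:ℂ)*z)‖ * ((N+1 : ℝ) * 2^N * (‖z‖+h)^N / r^N))
            * ((n:ℝ)^(2*N) * r^n) := by
          rw [hrpow, show 2*N = N+N from by ring, pow_add]
          field_simp
end
end

section
/- Let m : ℝ → ℂ be Lebesgue measurable and let z₀ ∈ ℂ be such that t ↦ e^{-z₀ t} m(t) is Lebesgue integrable on (0,∞). Then for every z ∈ ℂ with Re(z) > Re(z₀), the series ∑_{k=0}^{∞} C(z − z₀, k) ∫₀^∞ (e^{-t} − 1)^k e^{-z₀ t} m(t) dt converges and its sum equals ∫₀^∞ e^{-z t} m(t) dt. -/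
open MeasureTheory Filter Finset Topology

noncomputable section

/-- The generalized binomial coefficient `C(w, k) = w (w-1) ⋯ (w-k+1) / k!`. -/
def genBinom (w : ℂ) (k : ℕ) : ℂ :=
  (∏ i ∈ Finset.range k, (w - (i : ℂ))) / (k.factorial : ℂ)

lemma genBinom_succ (w : ℂ) (k : ℕ) :
    genBinom w (k + 1) = genBinom w k * (w - k) / (k + 1) := by
  simp only [genBinom, Finset.prod_range_succ, Nat.factorial_succ, Nat.cast_mul]
  rw [div_mul_eq_mul_div, div_div, mul_comm ((k.factorial : ℂ)) _]
  push_cast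
  ring_nf

lemma norm_genBinom_succ (w : ℂ) (k : ℕ) :
    ‖genBinom w (k + 1)‖ = ‖genBinom w k‖ * ‖w - k‖ / (k + 1) := by
  rw [genBinom_succ, norm_div, norm_mul]
  congr 1
  have h : ((k : ℂ) + 1) = ((k + 1 : ℕ) : ℂ) := by push_cast; ring
  rw [h, Complex.norm_natCast]
  push_cast; ring

lemma mem_slitPlane_of_ball {y : ℂ} (hy : y ∈ Metric.ball (0 : ℂ) 1) :
    1 + y ∈ Complex.slitPlane := by
  rw [Metric.mem_ball, dist_zero_right] at hy
  left
  have h := abs_le.mp (Complex.abs_re_le_norm y)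
  have hne : ‖y‖ = ‖y‖ := rfl
  simp only [Complex.add_re, Complex.one_re]
  rw [hne] at hy
  linarith [h.1]

lemma hasDerivAt_onePowC (a : ℂ) {y : ℂ} (hy : 1 + y ∈ Complex.slitPlane) :
    HasDerivAt (fun y => Complex.exp (a * Complex.log (1 + y)))
      (a * Complex.exp ((a - 1) * Complex.log (1 + y))) y := by
  have h1 : HasDerivAt (fun y : ℂ => 1 + y) 1 y := (hasDerivAt_id y).const_add 1
  have h2 : HasDerivAt (fun y : ℂ => Complex.log (1 + y)) ((1 + y)⁻¹ * 1) y :=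
    (Complex.hasDerivAt_log hy).comp y h1
  have h3 := (h2.const_mul a).cexp
  refine h3.congr_deriv (Eq.symm ?_)
  have hne : (1 : ℂ) + y ≠ 0 := Complex.slitPlane_ne_zero hy
  rw [sub_mul, one_mul, Complex.exp_sub, Complex.exp_log hne]
  field_simp


lemma summable_norm_genBinom {w : ℂ} (hw : 0 < w.re) :
    Summable fun k : ℕ => ‖genBinom w k‖ := by
  set σ := w.re with hσ
  set s : ℝ := min σ 1 / 2 with hs
  have hs0 : 0 < s := by positivity
  have hs1 : s ≤ 1 := by
    have : min σ 1 ≤ 1 := min_le_right _ _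
    simp only [hs]; linarith
  have hsσ : s ≤ σ / 2 := by
    have : min σ 1 ≤ σ := min_le_left _ _
    simp only [hs]; linarith
  set K : ℕ := ⌈σ + w.im ^ 2 / σ⌉₊ + 1 with hK
  have hK1 : 1 ≤ K := Nat.le_add_left 1 _
  have hKge : ∀ k : ℕ, K ≤ k → σ + w.im ^ 2 / σ ≤ (k : ℝ) := by
    intro k hk
    calc σ + w.im ^ 2 / σ ≤ (⌈σ + w.im ^ 2 / σ⌉₊ : ℝ) := Nat.le_ceil _
    _ ≤ (K : ℝ) := by exact_mod_cast Nat.le_succ _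
    _ ≤ (k : ℝ) := by exact_mod_cast hk
  have hnorm : ∀ k : ℕ, K ≤ k → ‖w - k‖ ≤ (k : ℝ) - s := by
    intro k hk
    have hkr := hKge k hk
    have hks : σ * (k : ℝ) ≥ σ ^ 2 + w.im ^ 2 := by
      have := mul_le_mul_of_nonneg_left hkr hw.le
      rw [mul_add, mul_div_cancel₀ _ (ne_of_gt hw)] at this
      nlinarith
    have hk1 : (1 : ℝ) ≤ (k : ℝ) := by exact_mod_cast hK1.trans hk
    have hnsq : ‖w - k‖ ^ 2 = (σ - k) ^ 2 + w.im ^ 2 := by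
      rw [Complex.sq_norm]
      simp only [Complex.normSq_apply, Complex.sub_re, Complex.sub_im, Complex.natCast_re,
        Complex.natCast_im, hσ]
      ring
    have hle : ‖w - k‖ ^ 2 ≤ ((k : ℝ) - s) ^ 2 := by rw [hnsq]; nlinarith
    have h0 : (0 : ℝ) ≤ (k : ℝ) - s := by linarith
    nlinarith [norm_nonneg (w - (k : ℂ))]
  have hratio : ∀ k : ℕ, K ≤ k →
      ‖genBinom w (k + 1)‖ * ((k : ℝ) + 1) ^ (1 + s) ≤ ‖genBinom w k‖ * (k : ℝ) ^ (1 + s) := by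
    intro k hk
    have hk1 : (1 : ℝ) ≤ (k : ℝ) := by exact_mod_cast hK1.trans hk
    have hk0 : (0 : ℝ) < k := by linarith
    have hbern : ((k : ℝ) + 1) ^ s ≤ (1 + s / k) * (k : ℝ) ^ s := by
      have h1 : ((1 : ℝ) + 1 / k) ^ s ≤ 1 + s * (1 / k) :=
        rpow_one_add_le_one_add_mul_self (by
          have h := one_div_nonneg.mpr hk0.le; linarith) hs0.le hs1
      have h2 : ((k : ℝ) + 1) ^ s = ((1 + 1 / k) * k) ^ s := by congr 1; field_simp
      rw [h2, Real.mul_rpow (by positivity) (by positivity)]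
      calc (1 + 1 / (k:ℝ)) ^ s * (k : ℝ) ^ s ≤ (1 + s * (1 / k)) * (k : ℝ) ^ s :=
            mul_le_mul_of_nonneg_right h1 (by positivity)
        _ = (1 + s / k) * (k : ℝ) ^ s := by rw [mul_one_div]
    have hwk := hnorm k hk
    have key : ‖w - k‖ * ((k : ℝ) + 1) ^ s ≤ (k : ℝ) * (k : ℝ) ^ s := by
      calc ‖w - k‖ * ((k : ℝ) + 1) ^ s ≤ ((k : ℝ) - s) * ((1 + s / k) * (k : ℝ) ^ s) :=
            mul_le_mul hwk hbern (by positivity) (by linarith)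
        _ ≤ (k : ℝ) * (k : ℝ) ^ s := by
            have hexp : ((k : ℝ) - s) * (1 + s / k) = (k : ℝ) - s ^ 2 / k := by
              field_simp; ring
            have h3 : ((k : ℝ) - s) * (1 + s / k) ≤ (k : ℝ) := by
              rw [hexp]
              have : (0:ℝ) ≤ s ^ 2 / k := by positivity
              linarith
            calc ((k : ℝ) - s) * ((1 + s / k) * (k : ℝ) ^ s)
                = ((k : ℝ) - s) * (1 + s / k) * (k : ℝ) ^ s := by ring
              _ ≤ (k : ℝ) * (k : ℝ) ^ s :=
                  mul_le_mul_of_nonneg_right h3 (by positivity)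
    rw [norm_genBinom_succ]
    have hpow1 : ((k : ℝ) + 1) ^ (1 + s) = ((k : ℝ) + 1) * ((k : ℝ) + 1) ^ s :=
      by rw [Real.rpow_add (by positivity), Real.rpow_one]
    have hpowk : (k : ℝ) ^ (1 + s) = (k : ℝ) * (k : ℝ) ^ s := by
      rw [Real.rpow_add hk0, Real.rpow_one]
    rw [hpow1, hpowk]
    have hrw : ‖genBinom w k‖ * ‖w - ↑k‖ / (↑k + 1) * ((↑k + 1) * ((k : ℝ) + 1) ^ s)
        = ‖genBinom w k‖ * (‖w - ↑k‖ * ((k : ℝ) + 1) ^ s) := by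
      field_simp
    rw [hrw]
    exact mul_le_mul_of_nonneg_left key (norm_nonneg _)
  -- decay bound by induction
  set C : ℝ := ‖genBinom w K‖ * (K : ℝ) ^ (1 + s) with hC
  have hKpos : (0 : ℝ) < K := by exact_mod_cast hK1
  have hdecay : ∀ n : ℕ, ‖genBinom w (K + n)‖ * ((K + n : ℕ) : ℝ) ^ (1 + s) ≤ C := by
    intro n
    induction n with
    | zero => simp [hC]
    | succ n ih =>
      have h := hratio (K + n) (Nat.le_add_right _ _)
      have hcast : (((K + n + 1) : ℕ) : ℝ) = ((K + n : ℕ) : ℝ) + 1 := by push_cast; ring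
      rw [show K + (n + 1) = K + n + 1 from rfl, hcast]
      exact h.trans ih
  -- conclude summability
  have hcomp : Summable fun n : ℕ => ‖genBinom w (K + n)‖ := by
    have hsum : Summable fun n : ℕ => C * (((K + n : ℕ) : ℝ) ^ (1 + s))⁻¹ := by
      have h1 : Summable fun n : ℕ => (((n : ℝ)) ^ (1 + s))⁻¹ :=
        Real.summable_nat_rpow_inv.mpr (by linarith)
      have h2 : Summable fun n : ℕ => (((K + n : ℕ) : ℝ) ^ (1 + s))⁻¹ :=
        ((summable_nat_add_iff K).mpr h1).congr (fun n => by rw [Nat.add_comm n K])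
      exact h2.mul_left C
    apply Summable.of_nonneg_of_le (fun n => norm_nonneg _) _ hsum
    intro n
    have hp : (0 : ℝ) < ((K + n : ℕ) : ℝ) ^ (1 + s) := by
      apply Real.rpow_pos_of_pos
      have : (0 : ℝ) < (K : ℝ) := hKpos
      push_cast; linarith
    calc ‖genBinom w (K + n)‖ ≤ C / ((K + n : ℕ) : ℝ) ^ (1 + s) :=
          (le_div_iff₀ hp).mpr (hdecay n)
      _ = C * (((K + n : ℕ) : ℝ) ^ (1 + s))⁻¹ := div_eq_mul_inv _ _
  have hcomp' : Summable fun n : ℕ => ‖genBinom w (n + K)‖ :=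
    hcomp.congr (fun n => by rw [add_comm])
  exact (summable_nat_add_iff K).mp hcomp'


lemma iteratedDeriv_onePowC (w : ℂ) (n : ℕ) :
    Set.EqOn (iteratedDeriv n (fun y => Complex.exp (w * Complex.log (1 + y))))
      (fun y => (∏ i ∈ Finset.range n, (w - (i : ℂ))) *
        Complex.exp ((w - n) * Complex.log (1 + y)))
      (Metric.ball (0 : ℂ) 1) := by
  induction n with
  | zero => intro y hy; simp
  | succ n ih =>
    intro y hy
    rw [iteratedDeriv_succ]
    have heq : iteratedDeriv n (fun y => Complex.exp (w * Complex.log (1 + y))) =ᶠ[nhds y]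
        (fun y => (∏ i ∈ Finset.range n, (w - (i : ℂ))) *
          Complex.exp ((w - n) * Complex.log (1 + y))) :=
      Filter.eventuallyEq_of_mem ((Metric.isOpen_ball).mem_nhds hy) ih
    rw [heq.deriv_eq]
    have hd := ((hasDerivAt_onePowC (w - n) (mem_slitPlane_of_ball hy)).const_mul
      (∏ i ∈ Finset.range n, (w - (i : ℂ)))).deriv
    rw [hd]
    rw [Finset.prod_range_succ]
    push_cast
    rw [show w - ((n : ℂ) + 1) = w - n - 1 by ring]
    ring

lemma hasSum_genBinom (w : ℂ) {x : ℂ} (hx : ‖x‖ < 1) :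
    HasSum (fun k : ℕ => genBinom w k * x ^ k)
      (Complex.exp (w * Complex.log (1 + x))) := by
  have hdiff : DifferentiableOn ℂ (fun y => Complex.exp (w * Complex.log (1 + y)))
      (Metric.ball (0 : ℂ) 1) := fun y hy =>
    (hasDerivAt_onePowC w (mem_slitPlane_of_ball hy)).differentiableAt.differentiableWithinAt
  have H := Complex.hasSum_taylorSeries_on_ball hdiff (mem_ball_zero_iff.mpr hx)
  convert H using 2 with n
  · rfl
  rw [iteratedDeriv_onePowC w n (Metric.mem_ball_self one_pos)]
  simp only [sub_zero, smul_eq_mul, genBinom]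
  rw [show (1 : ℂ) + 0 = 1 by ring, Complex.log_one, mul_zero, Complex.exp_zero, mul_one]
  field_simp


theorem newton_series_interchange_step
    (m : ℝ → ℂ) (hm : Measurable m) (z₀ : ℂ)
    (hint : IntegrableOn (fun t : ℝ => Complex.exp (-z₀ * t) * m t) (Set.Ioi 0))
    (z : ℂ) (hz : z₀.re < z.re) :
    Tendsto (fun n : ℕ =>
        ∑ k ∈ Finset.range n, genBinom (z - z₀) k *
          ∫ t in Set.Ioi (0 : ℝ),
            (Complex.exp (-(t : ℂ)) - 1) ^ k * Complex.exp (-z₀ * t) * m t)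
      atTop (nhds (∫ t in Set.Ioi (0 : ℝ), Complex.exp (-z * t) * m t)) := by
  set w := z - z₀ with hwdef
  have hw : 0 < w.re := by
    rw [hwdef, Complex.sub_re]; linarith
  have hB := summable_norm_genBinom hw
  set B := ∑' k, ‖genBinom w k‖ with hBdef
  have hxeq : ∀ t : ℝ, Complex.exp (-(t : ℂ)) - 1 = ((Real.exp (-t) - 1 : ℝ) : ℂ) := by
    intro t
    rw [Complex.ofReal_sub, Complex.ofReal_exp, Complex.ofReal_neg, Complex.ofReal_one]
  have hxnorm : ∀ t : ℝ, 0 ≤ t → ‖Complex.exp (-(t : ℂ)) - 1‖ < 1 := by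
    intro t ht
    rw [hxeq t, Complex.norm_real, Real.norm_eq_abs]
    have h1 : Real.exp (-t) ≤ 1 := Real.exp_le_one_iff.mpr (by linarith)
    have h2 : 0 < Real.exp (-t) := Real.exp_pos _
    rw [abs_of_nonpos (by linarith)]
    linarith
  have hxle : ∀ t : ℝ, 0 ≤ t → ∀ k : ℕ, ‖(Complex.exp (-(t : ℂ)) - 1) ^ k‖ ≤ 1 := by
    intro t ht k
    rw [norm_pow]
    exact pow_le_one₀ (norm_nonneg _) (hxnorm t ht).le
  have hmeas : ∀ k : ℕ, AEStronglyMeasurable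
      (fun t : ℝ => (Complex.exp (-(t : ℂ)) - 1) ^ k * Complex.exp (-z₀ * t) * m t)
      (volume.restrict (Set.Ioi 0)) := by
    intro k
    apply Measurable.aestronglyMeasurable
    fun_prop
  have hintk : ∀ k : ℕ, IntegrableOn
      (fun t : ℝ => (Complex.exp (-(t : ℂ)) - 1) ^ k * Complex.exp (-z₀ * t) * m t)
      (Set.Ioi 0) := by
    intro k
    refine MeasureTheory.Integrable.mono hint (hmeas k) ?_
    rw [ae_restrict_iff' measurableSet_Ioi]
    refine Eventually.of_forall (fun t ht => ?_)
    have heq : ‖(Complex.exp (-(t : ℂ)) - 1) ^ k * Complex.exp (-z₀ * t) * m t‖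
        = ‖(Complex.exp (-(t : ℂ)) - 1) ^ k‖ * ‖Complex.exp (-z₀ * t) * m t‖ := by
      rw [← norm_mul]; congr 1; ring
    rw [heq]
    calc ‖(Complex.exp (-(t : ℂ)) - 1) ^ k‖ * ‖Complex.exp (-z₀ * t) * m t‖
        ≤ 1 * ‖Complex.exp (-z₀ * t) * m t‖ := by
          gcongr; exact hxle t (le_of_lt (Set.mem_Ioi.mp ht)) k
      _ = ‖Complex.exp (-z₀ * t) * m t‖ := one_mul _
  have hrw : ∀ n : ℕ, ∑ k ∈ Finset.range n, genBinom w k *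
        ∫ t in Set.Ioi (0 : ℝ), (Complex.exp (-(t : ℂ)) - 1) ^ k * Complex.exp (-z₀ * t) * m t
      = ∫ t in Set.Ioi (0 : ℝ), ∑ k ∈ Finset.range n,
          genBinom w k * ((Complex.exp (-(t : ℂ)) - 1) ^ k * Complex.exp (-z₀ * t) * m t) := by
    intro n
    rw [MeasureTheory.integral_finset_sum _ (fun k _ => (hintk k).const_mul _)]
    exact Finset.sum_congr rfl fun k _ => (MeasureTheory.integral_const_mul _ _).symm
  simp only [hrw]
  apply MeasureTheory.tendsto_integral_of_dominated_convergence
    (fun t : ℝ => B * ‖Complex.exp (-z₀ * t) * m t‖)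
  · intro n
    exact Finset.aestronglyMeasurable_fun_sum _ fun k _ => (hmeas k).const_mul _
  · exact hint.norm.const_mul B
  · intro n
    rw [ae_restrict_iff' measurableSet_Ioi]
    refine Eventually.of_forall (fun t ht => ?_)
    calc ‖∑ k ∈ Finset.range n, genBinom w k *
          ((Complex.exp (-(t : ℂ)) - 1) ^ k * Complex.exp (-z₀ * t) * m t)‖
        ≤ ∑ k ∈ Finset.range n, ‖genBinom w k *
          ((Complex.exp (-(t : ℂ)) - 1) ^ k * Complex.exp (-z₀ * t) * m t)‖ := norm_sum_le _ _
      _ ≤ ∑ k ∈ Finset.range n, ‖genBinom w k‖ * ‖Complex.exp (-z₀ * t) * m t‖ := by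
          refine Finset.sum_le_sum fun k _ => ?_
          have heq : ‖genBinom w k *
              ((Complex.exp (-(t : ℂ)) - 1) ^ k * Complex.exp (-z₀ * t) * m t)‖
              = ‖(Complex.exp (-(t : ℂ)) - 1) ^ k‖ *
                (‖genBinom w k‖ * ‖Complex.exp (-z₀ * t) * m t‖) := by
            rw [← norm_mul, ← norm_mul]; congr 1; ring
          rw [heq]
          calc ‖(Complex.exp (-(t : ℂ)) - 1) ^ k‖ *
                (‖genBinom w k‖ * ‖Complex.exp (-z₀ * t) * m t‖)
              ≤ 1 * (‖genBinom w k‖ * ‖Complex.exp (-z₀ * t) * m t‖) := by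
                gcongr; exact hxle t (le_of_lt (Set.mem_Ioi.mp ht)) k
            _ = _ := by rw [one_mul]
      _ ≤ B * ‖Complex.exp (-z₀ * t) * m t‖ := by
          rw [← Finset.sum_mul]
          exact mul_le_mul_of_nonneg_right
            (Summable.sum_le_tsum _ (fun _ _ => norm_nonneg _) hB) (norm_nonneg _)
  · rw [ae_restrict_iff' measurableSet_Ioi]
    refine Eventually.of_forall (fun t ht => ?_)
    have hx : ‖Complex.exp (-(t : ℂ)) - 1‖ < 1 := hxnorm t (le_of_lt (Set.mem_Ioi.mp ht))
    have hS := (hasSum_genBinom w hx).mul_right (Complex.exp (-z₀ * t) * m t)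
    have hsum_eq : Complex.exp (w * Complex.log (1 + (Complex.exp (-(t : ℂ)) - 1))) *
        (Complex.exp (-z₀ * t) * m t) = Complex.exp (-z * t) * m t := by
      rw [show (1 : ℂ) + (Complex.exp (-(t : ℂ)) - 1) = Complex.exp (-(t : ℂ)) by ring]
      rw [Complex.log_exp (by simp [Real.pi_pos]) (by simp [Real.pi_pos.le])]
      rw [← mul_assoc, ← Complex.exp_add]
      rw [show w * -(t : ℂ) + -z₀ * t = -z * t by rw [hwdef]; ring]
    rw [hsum_eq] at hS
    have htend := hS.tendsto_sum_nat
    refine htend.congr fun n => Finset.sum_congr rfl fun k _ => by ring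
end
end
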